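/- arXiv:1804.10449 — 8 statements merged into one kernel-verified Lean document; each statement's English description precedes it below -/
import Mathlib

section
/- The real part M_ℝ = M(U) ∩ ℝ of an origami set M(U) is an additive subgroup of ℝ containing ℤ. -/
open Real Complex Set

/-- The `θ`-projection of `z`: the unique real `x` with `z ∈ x + ℝ·exp(iθ)`
(for `θ ∈ (0,π)`); explicitly `x = Re z − Im z · cos θ / sin θ`. -/
noncomputable def proj (θ : ℝ) (z : ℂ) : ℝ := z.re - z.im * Real.cos θ / Real.sin θ

/-- `inter α β r s` is the (unique, for distinct `α β ∈ (0,π)`) complex number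
with `α`-projection `r` and `β`-projection `s`, i.e. `⟦r,s⟧_{α,β}`. -/
noncomputable def inter (α β r s : ℝ) : ℂ :=
  Classical.epsilon fun z : ℂ => proj α z = r ∧ proj β z = s

/-- The line through `z` with slope (angle) `θ`. -/
def lineThru (z : ℂ) (θ : ℝ) : Set ℂ := {w | ∃ t : ℝ, w = z + t * Complex.exp (θ * Complex.I)}

/-- The recursively defined stages of the origami set. -/
def origamiStep (U : Set ℝ) : ℕ → Set ℂ
  | 0 => {0, 1}
  | k + 1 => {w | ∃ z ∈ origamiStep U k, ∃ z' ∈ origamiStep U k,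
      ∃ γ ∈ U, ∃ γ' ∈ U, γ ≠ γ' ∧ w ∈ lineThru z γ ∧ w ∈ lineThru z' γ'}

/-- The origami set `M(U)`. -/
def origami (U : Set ℝ) : Set ℂ := ⋃ k, origamiStep U k

/-- The real part `M_ℝ = M(U) ∩ ℝ`, viewed as a set of reals. -/
def origamiR (U : Set ℝ) : Set ℝ := {x : ℝ | (x : ℂ) ∈ origami U}

lemma self_mem_lineThru (z : ℂ) (θ : ℝ) : z ∈ lineThru z θ := ⟨0, by simp⟩

lemma origamiStep_subset_succ {U : Set ℝ} {a b : ℝ} (ha : a ∈ U) (hb : b ∈ U) (hab : a ≠ b)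
    (k : ℕ) : origamiStep U k ⊆ origamiStep U (k + 1) := fun z hz =>
  ⟨z, hz, z, hz, a, ha, b, hb, hab, self_mem_lineThru z a, self_mem_lineThru z b⟩

lemma origamiStep_mono {U : Set ℝ} {a b : ℝ} (ha : a ∈ U) (hb : b ∈ U) (hab : a ≠ b)
    {k m : ℕ} (hkm : k ≤ m) : origamiStep U k ⊆ origamiStep U m := by
  induction hkm with
  | refl => exact subset_rfl
  | step h ih => exact ih.trans (origamiStep_subset_succ ha hb hab _)

/-- Closure of the origami set under taking intersection points. -/
lemma origami_inter {U : Set ℝ} {a b : ℝ} (ha : a ∈ U) (hb : b ∈ U) (hab : a ≠ b)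
    {z z' w : ℂ} (hz : z ∈ origami U) (hz' : z' ∈ origami U)
    {γ γ' : ℝ} (hγ : γ ∈ U) (hγ' : γ' ∈ U) (hne : γ ≠ γ')
    (hw : w ∈ lineThru z γ) (hw' : w ∈ lineThru z' γ') : w ∈ origami U := by
  obtain ⟨k, hk⟩ := Set.mem_iUnion.1 hz
  obtain ⟨m, hm⟩ := Set.mem_iUnion.1 hz'
  refine Set.mem_iUnion.2 ⟨max k m + 1, ?_⟩
  exact ⟨z, origamiStep_mono ha hb hab (le_max_left k m) hk,
    z', origamiStep_mono ha hb hab (le_max_right k m) hm, γ, hγ, γ', hγ', hne, hw, hw'⟩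

theorem origamiR_addSubgroup (U : Set ℝ) (hU : U ⊆ Set.Ico 0 Real.pi) (h0 : (0 : ℝ) ∈ U)
    (hcard : 3 ≤ U.encard) :
    ∃ G : AddSubgroup ℝ, (G : Set ℝ) = origamiR U ∧ ∀ n : ℤ, (n : ℝ) ∈ G := by
  -- extract two distinct nonzero angles
  obtain ⟨α, β, hα', hβ', hαβ⟩ : ∃ α β, α ∈ U \ {0} ∧ β ∈ U \ {0} ∧ α ≠ β := by
    apply Set.one_lt_encard_iff.1
    by_contra hc
    push_neg at hc
    have h2 : U.encard ≤ 2 := by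
      rw [← Set.encard_diff_singleton_add_one h0]
      exact le_trans (add_le_add_left hc 1) (by norm_num)
    exact absurd (hcard.trans h2) (by norm_num)
  obtain ⟨hαU, hα0⟩ := hα'
  obtain ⟨hβU, hβ0⟩ := hβ'
  simp only [Set.mem_singleton_iff] at hα0 hβ0
  have hαIoo : 0 < α ∧ α < π := ⟨lt_of_le_of_ne (hU hαU).1 (Ne.symm hα0), (hU hαU).2⟩
  have hβIoo : 0 < β ∧ β < π := ⟨lt_of_le_of_ne (hU hβU).1 (Ne.symm hβ0), (hU hβU).2⟩
  have hsα : Real.sin α ≠ 0 := ne_of_gt (Real.sin_pos_of_pos_of_lt_pi hαIoo.1 hαIoo.2)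
  have hsβ : Real.sin β ≠ 0 := ne_of_gt (Real.sin_pos_of_pos_of_lt_pi hβIoo.1 hβIoo.2)
  have hd : Real.sin (α - β) ≠ 0 := by
    rw [ne_eq, Real.sin_eq_zero_iff_of_lt_of_lt (by linarith [hαIoo.1, hβIoo.2])
      (by linarith [hαIoo.2, hβIoo.1])]
    exact sub_ne_zero.2 hαβ
  -- membership of 0 and 1
  have hC0 : (0 : ℂ) ∈ origami U := Set.mem_iUnion.2 ⟨0, by left; simp⟩
  have hC1 : (1 : ℂ) ∈ origami U := Set.mem_iUnion.2 ⟨0, by right; simp⟩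
  have hmem0 : (0 : ℝ) ∈ origamiR U := by simpa [origamiR] using hC0
  have hmem1 : (1 : ℝ) ∈ origamiR U := by simpa [origamiR] using hC1
  -- key closure: y - x
  have hsub : ∀ x y : ℝ, x ∈ origamiR U → y ∈ origamiR U → y - x ∈ origamiR U := by
    intro x y hx hy
    set b : ℝ := x * Real.sin α * Real.sin β / Real.sin (α - β) with hbdef
    set z1 : ℂ := ((x + b * Real.cos α / Real.sin α : ℝ) : ℂ) + (b : ℂ) * Complex.I with hz1
    set w : ℂ := ((y + b * Real.cos α / Real.sin α : ℝ) : ℂ) + (b : ℂ) * Complex.I with hw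
    have key : ∀ u : ℝ, (((u + b * Real.cos α / Real.sin α : ℝ) : ℂ) + (b : ℂ) * Complex.I)
        ∈ lineThru (u : ℂ) α := by
      intro u
      refine ⟨b / Real.sin α, ?_⟩
      rw [Complex.exp_mul_I]
      simp only [Complex.ext_iff, Complex.add_re, Complex.add_im, Complex.ofReal_re,
        Complex.ofReal_im, Complex.mul_re, Complex.mul_im, Complex.I_re, Complex.I_im,
        Complex.cos_ofReal_re, Complex.sin_ofReal_re, Complex.cos_ofReal_im,
        Complex.sin_ofReal_im]
      constructor <;> push_cast <;> field_simp <;> ring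
    have hz1x : z1 ∈ lineThru (x : ℂ) α := key x
    have hz10 : z1 ∈ lineThru (0 : ℂ) β := by
      refine ⟨b / Real.sin β, ?_⟩
      rw [Complex.exp_mul_I]
      simp only [Complex.ext_iff, Complex.add_re, Complex.add_im, Complex.ofReal_re,
        Complex.ofReal_im, Complex.mul_re, Complex.mul_im, Complex.I_re, Complex.I_im,
        Complex.cos_ofReal_re, Complex.sin_ofReal_re, Complex.cos_ofReal_im,
        Complex.sin_ofReal_im, Complex.zero_re, Complex.zero_im, hz1]
      constructor <;> push_cast <;> rw [hbdef]
      · rw [Real.sin_sub] at hd ⊢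
        field_simp <;> ring_nf
        have hD : (-(Real.sin β * Real.cos α) + Real.sin α * Real.cos β) * (-(Real.sin β * Real.cos α) + Real.sin α * Real.cos β)⁻¹ = 1 :=
          mul_inv_cancel₀ (by intro h; apply hd; linarith)
        linear_combination (-x) * hD
      · field_simp <;> ring
    have hz1mem : z1 ∈ origami U :=
      origami_inter h0 hαU (Ne.symm hα0) hx hC0 hαU hβU hαβ hz1x hz10
    have hwz1 : w ∈ lineThru z1 0 := by
      refine ⟨y - x, ?_⟩
      rw [Complex.exp_mul_I]
      simp only [Complex.ext_iff, Complex.add_re, Complex.add_im, Complex.ofReal_re,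
        Complex.ofReal_im, Complex.mul_re, Complex.mul_im, Complex.I_re, Complex.I_im,
        Complex.cos_ofReal_re, Complex.sin_ofReal_re, Complex.cos_ofReal_im,
        Complex.sin_ofReal_im, hz1, hw]
      push_cast
      constructor <;> simp <;> ring
    have hwy : w ∈ lineThru (y : ℂ) α := key y
    have hwmem : w ∈ origami U :=
      origami_inter h0 hαU (Ne.symm hα0) hz1mem hy h0 hαU (Ne.symm hα0) hwz1 hwy
    -- final: (y - x : ℂ) is on lineThru w β and lineThru 0 0
    have hfin1 : ((y - x : ℝ) : ℂ) ∈ lineThru w β := by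
      refine ⟨-(b / Real.sin β), ?_⟩
      rw [Complex.exp_mul_I]
      simp only [Complex.ext_iff, Complex.add_re, Complex.add_im, Complex.ofReal_re,
        Complex.ofReal_im, Complex.mul_re, Complex.mul_im, Complex.I_re, Complex.I_im,
        Complex.cos_ofReal_re, Complex.sin_ofReal_re, Complex.cos_ofReal_im,
        Complex.sin_ofReal_im, hw]
      constructor <;> push_cast <;> rw [hbdef]
      · rw [Real.sin_sub] at hd ⊢
        field_simp <;> ring_nf
        have hD : (-(Real.sin β * Real.cos α) + Real.sin α * Real.cos β) * (-(Real.sin β * Real.cos α) + Real.sin α * Real.cos β)⁻¹ = 1 :=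
          mul_inv_cancel₀ (by intro h; apply hd; linarith)
        linear_combination x * hD
      · field_simp <;> ring
    have hfin2 : ((y - x : ℝ) : ℂ) ∈ lineThru (0 : ℂ) 0 := ⟨y - x, by simp⟩
    exact origami_inter h0 hαU (Ne.symm hα0) hwmem hC0 hβU h0 hβ0 hfin1 hfin2
  -- build the subgroup
  let G : AddSubgroup ℝ :=
    { carrier := origamiR U
      zero_mem' := hmem0
      add_mem' := by
        intro x y hx hy
        have hnx : -x ∈ origamiR U := by simpa using hsub x 0 hx hmem0
        have h := hsub (-x) y hnx hy
        simpa [sub_neg_eq_add, add_comm] using h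
      neg_mem' := by
        intro x hx
        simpa using hsub x 0 hx hmem0 }
  refine ⟨G, rfl, fun n => ?_⟩
  have h1G : (1 : ℝ) ∈ G := hmem1
  simpa using G.zsmul_mem h1G n
end

section
/- Let U ⊆ [0, π) with 0 ∈ U and |U| ≥ 3, let α, β be distinct nonzero elements of U, and let M = M(U) with real part M_ℝ. Then M = M_ℝ + M_ℝ · ⟦0,1⟧, i.e. M = { r + s·⟦0,1⟧ : r, s ∈ M_ℝ }. In particular, M is an additive subgroup of ℂ. -/
open Real Complex Set

namespace OrigamiAux

lemma proj_add (θ : ℝ) (z w : ℂ) : proj θ (z + w) = proj θ z + proj θ w := by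
  simp only [proj, Complex.add_re, Complex.add_im]; ring

lemma proj_real (θ : ℝ) (r : ℝ) : proj θ (r : ℂ) = r := by
  simp [proj]

lemma proj_real_mul (θ : ℝ) (s : ℝ) (z : ℂ) : proj θ ((s : ℂ) * z) = s * proj θ z := by
  simp only [proj, Complex.re_ofReal_mul, Complex.im_ofReal_mul]; ring

lemma mem_lineThru_iff {θ : ℝ} (hθ : Real.sin θ ≠ 0) {z w : ℂ} :
    w ∈ lineThru z θ ↔ proj θ w = proj θ z := by
  constructor
  · rintro ⟨t, rfl⟩
    simp only [proj, Complex.add_re, Complex.add_im, Complex.re_ofReal_mul,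
      Complex.im_ofReal_mul, Complex.exp_ofReal_mul_I_re, Complex.exp_ofReal_mul_I_im]
    field_simp
    ring
  · intro h
    refine ⟨(w.im - z.im) / Real.sin θ, ?_⟩
    simp only [proj] at h
    apply Complex.ext
    · simp only [Complex.add_re, Complex.re_ofReal_mul, Complex.exp_ofReal_mul_I_re]
      field_simp at h ⊢
      linarith
    · simp only [Complex.add_im, Complex.im_ofReal_mul, Complex.exp_ofReal_mul_I_im]
      field_simp
      ring
  
lemma mem_lineThru_zero {z w : ℂ} : w ∈ lineThru z 0 ↔ w.im = z.im := by
  constructor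
  · rintro ⟨t, rfl⟩
    simp
  · intro h
    refine ⟨w.re - z.re, ?_⟩
    apply Complex.ext <;> simp [h]

lemma mem_self_lineThru (z : ℂ) (θ : ℝ) : z ∈ lineThru z θ := ⟨0, by simp⟩

lemma proj_ext {α β : ℝ} (hκ : Real.cos α / Real.sin α ≠ Real.cos β / Real.sin β)
    {z w : ℂ} (h1 : proj α z = proj α w) (h2 : proj β z = proj β w) : z = w := by
  simp only [proj] at h1 h2
  rw [mul_div_assoc] at h1 h2
  rw [mul_div_assoc (w.im)] at h1 h2
  set ca := Real.cos α / Real.sin α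
  set cb := Real.cos β / Real.sin β
  have him : z.im = w.im := by
    have h3 : (z.im - w.im) * (ca - cb) = 0 := by linarith
    rcases mul_eq_zero.mp h3 with h | h
    · linarith
    · exact absurd (sub_eq_zero.mp h) hκ
  apply Complex.ext
  · rw [him] at h1; linarith
  · exact him

lemma inter_spec {α β : ℝ} (hsα : Real.sin α ≠ 0) (hsβ : Real.sin β ≠ 0)
    (hκ : Real.cos α / Real.sin α ≠ Real.cos β / Real.sin β) (r s : ℝ) :
    proj α (inter α β r s) = r ∧ proj β (inter α β r s) = s := by
  apply Classical.epsilon_spec (p := fun z : ℂ => proj α z = r ∧ proj β z = s)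
  set ca := Real.cos α / Real.sin α
  set cb := Real.cos β / Real.sin β
  have hκ' : ca - cb ≠ 0 := sub_ne_zero.mpr hκ
  refine ⟨⟨r + (s - r) / (ca - cb) * ca, (s - r) / (ca - cb)⟩, ?_, ?_⟩
  · show r + (s - r) / (ca - cb) * ca - (s - r) / (ca - cb) * Real.cos α / Real.sin α = r
    rw [mul_div_assoc]
    ring
  · show r + (s - r) / (ca - cb) * ca - (s - r) / (ca - cb) * Real.cos β / Real.sin β = s
    rw [mul_div_assoc]
    have h3 : (s - r) / (ca - cb) * ca - (s - r) / (ca - cb) * cb = s - r := by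
      rw [← mul_sub, div_mul_cancel₀ _ hκ']
    linarith

lemma zero_mem (U : Set ℝ) : (0 : ℂ) ∈ origami U :=
  Set.mem_iUnion.mpr ⟨0, by simp [origamiStep]⟩

lemma one_mem (U : Set ℝ) : (1 : ℂ) ∈ origami U :=
  Set.mem_iUnion.mpr ⟨0, by simp [origamiStep]⟩

lemma step_mono {U : Set ℝ} {α : ℝ} (hα : α ∈ U) (h0 : (0:ℝ) ∈ U) (hα0 : α ≠ 0)
    {k m : ℕ} (hkm : k ≤ m) : origamiStep U k ⊆ origamiStep U m := by
  induction m with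
  | zero => simp_all
  | succ n ih =>
    rcases Nat.lt_or_ge k (n+1) with h | h
    · intro z hz
      have hz' : z ∈ origamiStep U n := ih (Nat.lt_succ_iff.mp h) hz
      exact ⟨z, hz', z, hz', α, hα, 0, h0, hα0, mem_self_lineThru z α, mem_self_lineThru z 0⟩
    · have : k = n + 1 := le_antisymm hkm h
      subst this
      exact fun z hz => hz

lemma inter_mem {U : Set ℝ} {α : ℝ} (hα : α ∈ U) (h0 : (0:ℝ) ∈ U) (hα0 : α ≠ 0)
    {u v w : ℂ} {γ γ' : ℝ} (hu : u ∈ origami U) (hv : v ∈ origami U)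
    (hγ : γ ∈ U) (hγ' : γ' ∈ U) (hne : γ ≠ γ')
    (h1 : w ∈ lineThru u γ) (h2 : w ∈ lineThru v γ') : w ∈ origami U := by
  obtain ⟨k, hk⟩ := Set.mem_iUnion.mp hu
  obtain ⟨m, hm⟩ := Set.mem_iUnion.mp hv
  refine Set.mem_iUnion.mpr ⟨max k m + 1, ?_⟩
  exact ⟨u, step_mono hα h0 hα0 (le_max_left k m) hk,
    v, step_mono hα h0 hα0 (le_max_right k m) hm, γ, hγ, γ', hγ', hne, h1, h2⟩

lemma one_sub_mem {U : Set ℝ} {z : ℂ} (h : z ∈ origami U) : 1 - z ∈ origami U := by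
  obtain ⟨k, hk⟩ := Set.mem_iUnion.mp h
  refine Set.mem_iUnion.mpr ⟨k, ?_⟩
  clear h
  induction k generalizing z with
  | zero =>
    rcases hk with h | h
    · simp [h, origamiStep]
    · simp only [origamiStep, Set.mem_singleton_iff] at h
      simp [h, origamiStep]
  | succ n ih =>
    obtain ⟨p, hp, q, hq, γ, hγ, γ', hγ', hne, ⟨t, ht⟩, ⟨t', ht'⟩⟩ := hk
    exact ⟨1 - p, ih hp, 1 - q, ih hq, γ, hγ, γ', hγ', hne,
      ⟨-t, by rw [ht]; push_cast; ring⟩, ⟨-t', by rw [ht']; push_cast; ring⟩⟩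

end OrigamiAux

open OrigamiAux in
theorem origami_eq_span (U : Set ℝ) (hU : U ⊆ Set.Ico 0 Real.pi) (h0 : (0 : ℝ) ∈ U)
    (hcard : 3 ≤ U.encard) (α β : ℝ) (hα : α ∈ U) (hβ : β ∈ U)
    (hα0 : α ≠ 0) (hβ0 : β ≠ 0) (hαβ : α ≠ β) :
    origami U = {w : ℂ | ∃ r ∈ origamiR U, ∃ s ∈ origamiR U,
        w = (r : ℂ) + (s : ℂ) * inter α β 0 1} ∧
    ∃ G : AddSubgroup ℂ, (G : Set ℂ) = origami U := by
  -- basic trigonometric facts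
  have hαI : α ∈ Set.Ico 0 Real.pi := hU hα
  have hβI : β ∈ Set.Ico 0 Real.pi := hU hβ
  have hαpos : 0 < α := lt_of_le_of_ne hαI.1 (Ne.symm hα0)
  have hβpos : 0 < β := lt_of_le_of_ne hβI.1 (Ne.symm hβ0)
  have hsα : 0 < Real.sin α := Real.sin_pos_of_pos_of_lt_pi hαpos hαI.2
  have hsβ : 0 < Real.sin β := Real.sin_pos_of_pos_of_lt_pi hβpos hβI.2
  have hsα' : Real.sin α ≠ 0 := ne_of_gt hsα
  have hsβ' : Real.sin β ≠ 0 := ne_of_gt hsβ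
  have hκ : Real.cos α / Real.sin α ≠ Real.cos β / Real.sin β := by
    intro h
    have h1 : Real.cos α * Real.sin β = Real.cos β * Real.sin α :=
      (div_eq_div_iff hsα' hsβ').mp h
    have h2 : Real.sin (β - α) = 0 := by
      rw [Real.sin_sub]; linarith
    obtain ⟨n, hn⟩ := Real.sin_eq_zero_iff.mp h2
    have hπ : 0 < Real.pi := Real.pi_pos
    rcases lt_trichotomy n 0 with h | h | h
    · have hn1 : n ≤ -1 := by omega
      have : (n : ℝ) ≤ -1 := by exact_mod_cast hn1
      nlinarith [hαI.2, hβpos]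
    · subst h
      simp at hn
      exact hαβ (by linarith)
    · have hn1 : (1 : ℤ) ≤ n := h
      have : (1 : ℝ) ≤ (n : ℝ) := by exact_mod_cast hn1
      nlinarith [hβI.2, hαpos]
  -- membership characterizations
  have hlineα : ∀ z w : ℂ, w ∈ lineThru z α ↔ proj α w = proj α z :=
    fun z w => mem_lineThru_iff hsα'
  have hlineβ : ∀ z w : ℂ, w ∈ lineThru z β ↔ proj β w = proj β z :=
    fun z w => mem_lineThru_iff hsβ'
  -- the real projection of a point of M along angle γ∈{α,β} is in M
  have hrealproj : ∀ (γ : ℝ), γ ∈ U → γ ≠ 0 → Real.sin γ ≠ 0 →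
      ∀ w ∈ origami U, ((proj γ w : ℝ) : ℂ) ∈ origami U := by
    intro γ hγ hγ0 hsγ w hw
    apply inter_mem hα h0 hα0 hw (zero_mem U) hγ h0 hγ0
    · exact (mem_lineThru_iff hsγ).mpr (proj_real γ _)
    · exact mem_lineThru_zero.mpr (by simp)
  -- M_ℝ is closed under addition
  have haddR : ∀ x ∈ origamiR U, ∀ y ∈ origamiR U, x + y ∈ origamiR U := by
    intro x hx y hy
    -- p1 : the point with proj α = 0, proj β = y
    set p1 : ℂ := inter α β 0 y with hp1def
    obtain ⟨hp1α, hp1β⟩ := inter_spec hsα' hsβ' hκ 0 y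
    have hp1 : p1 ∈ origami U := by
      apply inter_mem hα h0 hα0 (zero_mem U) hy hα hβ hαβ
      · exact (hlineα _ _).mpr (by rw [hp1α]; simp [proj])
      · exact (hlineβ _ _).mpr (by rw [hp1β, proj_real])
    -- w2 = p1 + x
    have hw2 : p1 + (x : ℂ) ∈ origami U := by
      apply inter_mem hα h0 hα0 hp1 hx h0 hα (Ne.symm hα0)
      · exact mem_lineThru_zero.mpr (by simp)
      · exact (hlineα _ _).mpr (by rw [proj_add, hp1α, proj_real]; ring)
    -- project w2 along β to the real axis
    have key : proj β (p1 + (x : ℂ)) = x + y := by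
      rw [proj_add, hp1β, proj_real]; ring
    have : ((x + y : ℝ) : ℂ) ∈ origami U := by
      apply inter_mem hα h0 hα0 hw2 (zero_mem U) hβ h0 hβ0
      · exact (hlineβ _ _).mpr (by rw [proj_real, key])
      · exact mem_lineThru_zero.mpr (by simp)
    exact this
  -- M is closed under addition
  have hadd : ∀ u ∈ origami U, ∀ v ∈ origami U, u + v ∈ origami U := by
    intro u hu v hv
    have haα : proj α u ∈ origamiR U := hrealproj α hα hα0 hsα' u hu
    have haα' : proj α v ∈ origamiR U := hrealproj α hα hα0 hsα' v hv
    have haβ : proj β u ∈ origamiR U := hrealproj β hβ hβ0 hsβ' u hu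
    have haβ' : proj β v ∈ origamiR U := hrealproj β hβ hβ0 hsβ' v hv
    have hs1 : proj α u + proj α v ∈ origamiR U := haddR _ haα _ haα'
    have hs2 : proj β u + proj β v ∈ origamiR U := haddR _ haβ _ haβ'
    apply inter_mem hα h0 hα0 hs1 hs2 hα hβ hαβ
    · exact (hlineα _ _).mpr (by rw [proj_add, proj_real])
    · exact (hlineβ _ _).mpr (by rw [proj_add, proj_real])

  -- M is closed under negation
  have hneg : ∀ u ∈ origami U, -u ∈ origami U := by
    intro u hu
    have h2 : (1 : ℂ) + 1 ∈ origami U := hadd 1 (one_mem U) 1 (one_mem U)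
    have hm1 : (1 : ℂ) - (1 + 1) ∈ origami U := one_sub_mem h2
    have h1u : (1 : ℂ) - u ∈ origami U := one_sub_mem hu
    have := hadd _ h1u _ hm1
    convert this using 1
    ring
  -- the generator e = ⟦0,1⟧
  obtain ⟨heα, heβ⟩ := inter_spec hsα' hsβ' hκ 0 1
  constructor
  · ext w
    simp only [Set.mem_setOf_eq]
    constructor
    · intro hw
      set r := proj α w with hr
      set t := proj β w with ht
      have hrR : r ∈ origamiR U := hrealproj α hα hα0 hsα' w hw
      have htR : t ∈ origamiR U := hrealproj β hβ hβ0 hsβ' w hw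
      have hsR : t - r ∈ origamiR U := by
        have hnr : (-r : ℝ) ∈ origamiR U := by
          have : (-(r : ℂ)) ∈ origami U := hneg _ hrR
          simpa [origamiR] using this
        have := haddR t htR (-r) hnr
        simpa [sub_eq_add_neg] using this
      refine ⟨r, hrR, t - r, hsR, ?_⟩
      apply proj_ext hκ
      · rw [proj_add, proj_real, proj_real_mul, heα, ← hr]
        ring
      · rw [proj_add, proj_real, proj_real_mul, heβ, ← ht]
        ring
    · rintro ⟨r, hr, s, hs, rfl⟩
      have hrs : r + s ∈ origamiR U := haddR r hr s hs
      apply inter_mem hα h0 hα0 hr hrs hα hβ hαβ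
      · refine (hlineα _ _).mpr ?_
        rw [proj_add, proj_real_mul, heα, proj_real]
        ring
      · refine (hlineβ _ _).mpr ?_
        rw [proj_add, proj_real_mul, heβ, proj_real, proj_real]
        ring
  · exact ⟨{ carrier := origami U
             zero_mem' := zero_mem U
             add_mem' := fun ha hb => hadd _ ha _ hb
             neg_mem' := fun ha => hneg _ ha }, rfl⟩
end

section
/- Let α, β, γ, δ ∈ (0, π) with α ≠ β and γ ≠ δ, and let p(γ), p(δ) denote the γ- and δ-projections of ⟦0,1⟧_{α,β}. Then for all r, s ∈ ℝ: ⟦r,s⟧_{α,β} = ⟦r + (s−r)p(γ), r + (s−r)p(δ)⟧_{γ,δ}. -/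
open Real Complex Set

lemma proj_eq (θ : ℝ) (z : ℂ) : proj θ z = z.re - z.im * (Real.cos θ / Real.sin θ) := by
  simp [proj, mul_div_assoc]

lemma cot_ne (α β : ℝ) (hα : α ∈ Set.Ioo 0 Real.pi) (hβ : β ∈ Set.Ioo 0 Real.pi)
    (h : α ≠ β) : Real.cos α / Real.sin α ≠ Real.cos β / Real.sin β := by
  have sα := Real.sin_pos_of_pos_of_lt_pi hα.1 hα.2
  have sβ := Real.sin_pos_of_pos_of_lt_pi hβ.1 hβ.2
  intro he
  have h1 : Real.cos α * Real.sin β = Real.cos β * Real.sin α := by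
    field_simp at he; linarith
  have h2 : Real.sin (β - α) = 0 := by
    rw [Real.sin_sub]; nlinarith
  rcases Real.sin_eq_zero_iff.1 h2 with ⟨n, hn⟩
  have hπ := Real.pi_pos
  have hn0 : n = 0 := by
    rcases lt_trichotomy n 0 with h' | h' | h'
    · have : (n:ℝ) ≤ -1 := by exact_mod_cast (by omega : n ≤ -1)
      nlinarith [hα.2, hβ.1]
    · exact h'
    · have : (1:ℝ) ≤ n := by exact_mod_cast h'
      nlinarith [hα.1, hβ.2]
  apply h; rw [hn0] at hn; push_cast at hn; linarith

lemma lin_exists (a b r s : ℝ) (h : a ≠ b) : ∃ x y : ℝ, x - y * a = r ∧ x - y * b = s := by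
  have hab : b - a ≠ 0 := sub_ne_zero.2 (Ne.symm h)
  exact ⟨r + (r - s) / (b - a) * a, (r - s) / (b - a), by ring, by field_simp; ring⟩

lemma lin_unique (a b x y x' y' : ℝ) (h : a ≠ b)
    (h1 : x - y * a = x' - y' * a) (h2 : x - y * b = x' - y' * b) : x = x' ∧ y = y' := by
  have h3 : (y - y') * (a - b) = 0 := by linear_combination h2 - h1
  have hy : y = y' := by
    rcases mul_eq_zero.1 h3 with h' | h'
    · linarith [sub_eq_zero.1 h']
    · exact absurd (sub_eq_zero.1 h') h
  subst hy
  exact ⟨by linarith, rfl⟩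

lemma inter_spec (α β : ℝ) (hα : α ∈ Set.Ioo 0 Real.pi) (hβ : β ∈ Set.Ioo 0 Real.pi)
    (h : α ≠ β) (r s : ℝ) :
    proj α (inter α β r s) = r ∧ proj β (inter α β r s) = s := by
  apply Classical.epsilon_spec (p := fun z : ℂ => proj α z = r ∧ proj β z = s)
  obtain ⟨x, y, h1, h2⟩ := lin_exists _ _ r s (cot_ne α β hα hβ h)
  exact ⟨⟨x, y⟩, by rw [proj_eq]; exact h1, by rw [proj_eq]; exact h2⟩

lemma inter_eq (α β : ℝ) (hα : α ∈ Set.Ioo 0 Real.pi) (hβ : β ∈ Set.Ioo 0 Real.pi)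
    (h : α ≠ β) (r s : ℝ) (w : ℂ) (h1 : proj α w = r) (h2 : proj β w = s) :
    inter α β r s = w := by
  obtain ⟨e1, e2⟩ := inter_spec α β hα hβ h r s
  set z := inter α β r s
  rw [proj_eq] at e1 e2 h1 h2
  obtain ⟨hre, him⟩ := lin_unique _ _ z.re z.im w.re w.im (cot_ne α β hα hβ h)
    (by rw [e1, h1]) (by rw [e2, h2])
  exact Complex.ext hre him

lemma proj_affine (θ a c : ℝ) (z : ℂ) :
    proj θ ((a : ℂ) + (c : ℂ) * z) = a + c * proj θ z := by
  rw [proj_eq, proj_eq]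
  simp [Complex.add_re, Complex.add_im, Complex.mul_re, Complex.mul_im]
  ring

theorem coord_transform_forward (α β γ δ : ℝ)
    (hα : α ∈ Set.Ioo 0 Real.pi) (hβ : β ∈ Set.Ioo 0 Real.pi)
    (hγ : γ ∈ Set.Ioo 0 Real.pi) (hδ : δ ∈ Set.Ioo 0 Real.pi)
    (hαβ : α ≠ β) (hγδ : γ ≠ δ) (r s : ℝ) :
    inter α β r s =
      inter γ δ (r + (s - r) * proj γ (inter α β 0 1))
                (r + (s - r) * proj δ (inter α β 0 1)) := by
  set z₀ := inter α β 0 1 with hz₀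
  obtain ⟨e1, e2⟩ := inter_spec α β hα hβ hαβ 0 1
  rw [← hz₀] at e1 e2
  have key : inter α β r s = (r : ℂ) + (s - r : ℝ) * z₀ := by
    apply inter_eq α β hα hβ hαβ
    · rw [proj_affine, e1]; ring
    · rw [proj_affine, e2]; ring
  rw [key]
  symm
  apply inter_eq γ δ hγ hδ hγδ
  · rw [proj_affine]
  · rw [proj_affine]
end

section
/- Let U ⊆ [0, π) with 0 ∈ U and |U| ≥ 3, fix distinct α, β ∈ U \ {0}, and let p(γ) be the γ-projection of ⟦0,1⟧ for γ ∈ U \ {0}. Let Δ = { p(γ) − p(δ) : γ, δ ∈ U \ {0}, γ ≠ δ } and Δ⁻¹ = { d⁻¹ : d ∈ Δ }. Then the subring ℤ[Δ, Δ⁻¹] of ℝ generated by Δ ∪ Δ⁻¹ is contained in M_ℝ. -/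
open Real Complex Set

lemma proj_ofReal (θ r : ℝ) : proj θ (r : ℂ) = r := by simp [proj]

lemma mem_lineThru_iff_proj {θ : ℝ} (h1 : 0 < θ) (h2 : θ < Real.pi) (z w : ℂ) :
    w ∈ lineThru z θ ↔ proj θ w = proj θ z := by
  have hs : Real.sin θ ≠ 0 := ne_of_gt (Real.sin_pos_of_pos_of_lt_pi h1 h2)
  constructor
  · rintro ⟨t, rfl⟩
    simp only [proj, Complex.add_re, Complex.add_im, Complex.re_ofReal_mul,
      Complex.im_ofReal_mul, Complex.exp_ofReal_mul_I_re, Complex.exp_ofReal_mul_I_im]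
    field_simp
    ring
  · intro h
    refine ⟨(w.im - z.im) / Real.sin θ, Complex.ext ?_ ?_⟩
    · simp only [proj] at h
      simp only [Complex.add_re, Complex.re_ofReal_mul, Complex.exp_ofReal_mul_I_re]
      field_simp at h ⊢
      linarith
    · simp only [Complex.add_im, Complex.im_ofReal_mul, Complex.exp_ofReal_mul_I_im]
      field_simp
      ring

lemma mem_lineThru_zero (z w : ℂ) : w ∈ lineThru z 0 ↔ w.im = z.im := by
  constructor
  · rintro ⟨t, rfl⟩; simp
  · intro h
    exact ⟨w.re - z.re, Complex.ext (by simp) (by simp [h])⟩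

lemma cot_ne_cot {γ δ : ℝ} (hγ1 : 0 < γ) (hγ2 : γ < Real.pi) (hδ1 : 0 < δ) (hδ2 : δ < Real.pi)
    (hne : γ ≠ δ) : Real.cos γ / Real.sin γ ≠ Real.cos δ / Real.sin δ := by
  have hsγ : Real.sin γ ≠ 0 := ne_of_gt (Real.sin_pos_of_pos_of_lt_pi hγ1 hγ2)
  have hsδ : Real.sin δ ≠ 0 := ne_of_gt (Real.sin_pos_of_pos_of_lt_pi hδ1 hδ2)
  intro h
  field_simp at h
  have hz : Real.sin (δ - γ) = 0 := by
    rw [Real.sin_sub]; nlinarith [h]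
  rw [Real.sin_eq_zero_iff_of_lt_of_lt (by linarith) (by linarith)] at hz
  exact hne (by linarith)

noncomputable def mk2 (γ δ r s : ℝ) : ℂ :=
  ⟨r + (r - s) / (Real.cos δ / Real.sin δ - Real.cos γ / Real.sin γ) * (Real.cos γ / Real.sin γ),
   (r - s) / (Real.cos δ / Real.sin δ - Real.cos γ / Real.sin γ)⟩

lemma mk2_im (γ δ r s : ℝ) :
    (mk2 γ δ r s).im = (r - s) / (Real.cos δ / Real.sin δ - Real.cos γ / Real.sin γ) := rfl

lemma mk2_proj1 {γ δ : ℝ} (hs : Real.sin γ ≠ 0) (r s : ℝ) : proj γ (mk2 γ δ r s) = r := by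
  simp only [proj, mk2]
  field_simp
  ring

lemma mk2_proj2 {γ δ : ℝ} (hsγ : Real.sin γ ≠ 0) (hsδ : Real.sin δ ≠ 0)
    (hne : Real.cos γ / Real.sin γ ≠ Real.cos δ / Real.sin δ) (r s : ℝ) :
    proj δ (mk2 γ δ r s) = s := by
  have hd : Real.cos δ / Real.sin δ - Real.cos γ / Real.sin γ ≠ 0 :=
    sub_ne_zero.mpr (Ne.symm hne)
  have key : (r - s) / (Real.cos δ / Real.sin δ - Real.cos γ / Real.sin γ)
      * (Real.cos δ / Real.sin δ - Real.cos γ / Real.sin γ) = r - s := div_mul_cancel₀ _ hd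
  simp only [proj, mk2]
  rw [mul_div_assoc]
  linear_combination -key

lemma origami_closed {U : Set ℝ} (h0 : 0 ∈ U) {α : ℝ} (hα : α ∈ U) (hα0 : α ≠ 0)
    {z z' w : ℂ} (hz : z ∈ origami U) (hz' : z' ∈ origami U)
    {γ γ' : ℝ} (hγ : γ ∈ U) (hγ' : γ' ∈ U) (hne : γ ≠ γ')
    (h1 : w ∈ lineThru z γ) (h2 : w ∈ lineThru z' γ') : w ∈ origami U := by
  have hsucc : ∀ k, origamiStep U k ⊆ origamiStep U (k + 1) := by
    intro k v hv
    exact ⟨v, hv, v, hv, 0, h0, α, hα, Ne.symm hα0, self_mem_lineThru v 0, self_mem_lineThru v α⟩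
  have mono : Monotone (origamiStep U) := monotone_nat_of_le_succ hsucc
  obtain ⟨k, hk⟩ := Set.mem_iUnion.mp hz
  obtain ⟨k', hk'⟩ := Set.mem_iUnion.mp hz'
  exact Set.mem_iUnion.mpr ⟨max k k' + 1,
    ⟨z, mono (le_max_left k k') hk, z', mono (le_max_right k k') hk',
      γ, hγ, γ', hγ', hne, h1, h2⟩⟩

lemma zero_mem_origami (U : Set ℝ) : (0 : ℂ) ∈ origami U :=
  Set.mem_iUnion.mpr ⟨0, Or.inl rfl⟩

lemma one_mem_origami (U : Set ℝ) : (1 : ℂ) ∈ origami U :=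
  Set.mem_iUnion.mpr ⟨0, Or.inr rfl⟩

section Setup

variable {U : Set ℝ} (hU : U ⊆ Set.Ico 0 Real.pi) (h0 : (0 : ℝ) ∈ U)
  {α β : ℝ} (hα : α ∈ U) (hβ : β ∈ U) (hα0 : α ≠ 0) (hβ0 : β ≠ 0) (hαβ : α ≠ β)

include hU h0 hα hβ hα0 hβ0 hαβ

lemma mem_Ioo_of_mem {θ : ℝ} (hθ : θ ∈ U) (hθ0 : θ ≠ 0) : 0 < θ ∧ θ < Real.pi := by
  have := hU hθ
  exact ⟨lt_of_le_of_ne this.1 (Ne.symm hθ0), this.2⟩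

lemma inter_spec_s11 : proj α (inter α β 0 1) = 0 ∧ proj β (inter α β 0 1) = 1 := by
  obtain ⟨hα1, hα2⟩ := mem_Ioo_of_mem hU h0 hα hβ hα0 hβ0 hαβ hα hα0
  obtain ⟨hβ1, hβ2⟩ := mem_Ioo_of_mem hU h0 hα hβ hα0 hβ0 hαβ hβ hβ0
  have hsα : Real.sin α ≠ 0 := ne_of_gt (Real.sin_pos_of_pos_of_lt_pi hα1 hα2)
  have hsβ : Real.sin β ≠ 0 := ne_of_gt (Real.sin_pos_of_pos_of_lt_pi hβ1 hβ2)
  have hne := cot_ne_cot hα1 hα2 hβ1 hβ2 hαβ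
  exact Classical.epsilon_spec (p := fun z : ℂ => proj α z = 0 ∧ proj β z = 1)
    ⟨mk2 α β 0 1, mk2_proj1 hsα 0 1, mk2_proj2 hsα hsβ hne 0 1⟩

lemma inter_im_ne : (inter α β 0 1).im ≠ 0 := by
  obtain ⟨h1, h2⟩ := inter_spec_s11 hU h0 hα hβ hα0 hβ0 hαβ
  intro h
  simp only [proj, h, zero_mul, zero_div, sub_zero] at h1 h2
  rw [h1] at h2
  norm_num at h2

lemma inter_mem_origami : inter α β 0 1 ∈ origami U := by
  obtain ⟨hα1, hα2⟩ := mem_Ioo_of_mem hU h0 hα hβ hα0 hβ0 hαβ hα hα0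
  obtain ⟨hβ1, hβ2⟩ := mem_Ioo_of_mem hU h0 hα hβ hα0 hβ0 hαβ hβ hβ0
  obtain ⟨h1, h2⟩ := inter_spec_s11 hU h0 hα hβ hα0 hβ0 hαβ
  refine origami_closed h0 hα hα0 (zero_mem_origami U) (one_mem_origami U) hα hβ hαβ ?_ ?_
  · rw [mem_lineThru_iff_proj hα1 hα2]
    rw [h1]; simp [proj]
  · rw [mem_lineThru_iff_proj hβ1 hβ2]
    rw [h2]; simp [proj]

/-- lift a real point to the horizontal line through `z`, along slope `α`. -/
lemma lift_mem {x : ℝ} (hx : x ∈ origamiR U) {z : ℂ} (hz : z ∈ origami U) :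
    (⟨x + z.im * (Real.cos α / Real.sin α), z.im⟩ : ℂ) ∈ origami U := by
  obtain ⟨hα1, hα2⟩ := mem_Ioo_of_mem hU h0 hα hβ hα0 hβ0 hαβ hα hα0
  refine origami_closed h0 hα hα0 hz hx h0 hα (Ne.symm hα0) ?_ ?_
  · rw [mem_lineThru_zero]
  · rw [mem_lineThru_iff_proj hα1 hα2, proj_ofReal]
    show x + z.im * (Real.cos α / Real.sin α) - z.im * Real.cos α / Real.sin α = x
    rw [mul_div_assoc]; ring

/-- project a point of the origami set to the real axis along slope `δ`. -/
lemma proj_mem_origamiR {δ : ℝ} (hδ : δ ∈ U) (hδ0 : δ ≠ 0) {z : ℂ} (hz : z ∈ origami U) :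
    proj δ z ∈ origamiR U := by
  obtain ⟨hδ1, hδ2⟩ := mem_Ioo_of_mem hU h0 hα hβ hα0 hβ0 hαβ hδ hδ0
  refine origami_closed h0 hδ hδ0 hz (zero_mem_origami U) hδ h0 hδ0 ?_ ?_
  · rw [mem_lineThru_iff_proj hδ1 hδ2, proj_ofReal]
  · rw [mem_lineThru_zero]
    rfl

lemma main_op {γ δ ε : ℝ} (hγ : γ ∈ U) (hδ : δ ∈ U) (hε : ε ∈ U)
    (hγ0 : γ ≠ 0) (hδ0 : δ ≠ 0) (hε0 : ε ≠ 0) (hγδ : γ ≠ δ)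
    {x u v : ℝ} (hx : x ∈ origamiR U) (hu : u ∈ origamiR U) (hv : v ∈ origamiR U) :
    x + (u - v + (proj γ (inter α β 0 1) - proj δ (inter α β 0 1)))
        * proj ε (inter α β 0 1) / (proj γ (inter α β 0 1) - proj δ (inter α β 0 1))
      ∈ origamiR U := by
  obtain ⟨hα1, hα2⟩ := mem_Ioo_of_mem hU h0 hα hβ hα0 hβ0 hαβ hα hα0
  obtain ⟨hγ1, hγ2⟩ := mem_Ioo_of_mem hU h0 hα hβ hα0 hβ0 hαβ hγ hγ0
  obtain ⟨hδ1, hδ2⟩ := mem_Ioo_of_mem hU h0 hα hβ hα0 hβ0 hαβ hδ hδ0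
  obtain ⟨hε1, hε2⟩ := mem_Ioo_of_mem hU h0 hα hβ hα0 hβ0 hαβ hε hε0
  have hsα : Real.sin α ≠ 0 := ne_of_gt (Real.sin_pos_of_pos_of_lt_pi hα1 hα2)
  have hsγ : Real.sin γ ≠ 0 := ne_of_gt (Real.sin_pos_of_pos_of_lt_pi hγ1 hγ2)
  have hsδ : Real.sin δ ≠ 0 := ne_of_gt (Real.sin_pos_of_pos_of_lt_pi hδ1 hδ2)
  have hsε : Real.sin ε ≠ 0 := ne_of_gt (Real.sin_pos_of_pos_of_lt_pi hε1 hε2)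
  have hcot : Real.cos γ / Real.sin γ ≠ Real.cos δ / Real.sin δ :=
    cot_ne_cot hγ1 hγ2 hδ1 hδ2 hγδ
  set z₀ : ℂ := inter α β 0 1 with hz₀def
  have hz₀ : z₀ ∈ origami U := inter_mem_origami hU h0 hα hβ hα0 hβ0 hαβ
  have him : z₀.im ≠ 0 := inter_im_ne hU h0 hα hβ hα0 hβ0 hαβ
  have hPα : proj α z₀ = 0 := (inter_spec_s11 hU h0 hα hβ hα0 hβ0 hαβ).1
  -- re of z₀ in terms of im
  have hre : z₀.re = z₀.im * (Real.cos α / Real.sin α) := by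
    have := hPα
    simp only [proj] at this
    rw [mul_div_assoc] at this
    linarith
  -- the lifted points
  have hA : (⟨u + z₀.im * (Real.cos α / Real.sin α), z₀.im⟩ : ℂ) ∈ origami U :=
    lift_mem hU h0 hα hβ hα0 hβ0 hαβ hu hz₀
  have hB : (⟨v + z₀.im * (Real.cos α / Real.sin α), z₀.im⟩ : ℂ) ∈ origami U :=
    lift_mem hU h0 hα hβ hα0 hβ0 hαβ hv hz₀
  set A : ℂ := ⟨u + z₀.im * (Real.cos α / Real.sin α), z₀.im⟩ with hAdef
  set B : ℂ := ⟨v + z₀.im * (Real.cos α / Real.sin α), z₀.im⟩ with hBdef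
  set C : ℂ := mk2 γ δ (proj γ A) (proj δ B) with hCdef
  have hC : C ∈ origami U := by
    refine origami_closed h0 hα hα0 hA hB hγ hδ hγδ ?_ ?_
    · rw [mem_lineThru_iff_proj hγ1 hγ2]
      exact mk2_proj1 hsγ _ _
    · rw [mem_lineThru_iff_proj hδ1 hδ2]
      exact mk2_proj2 hsγ hsδ hcot _ _
  have hD : (⟨x + C.im * (Real.cos α / Real.sin α), C.im⟩ : ℂ) ∈ origami U :=
    lift_mem hU h0 hα hβ hα0 hβ0 hαβ hx hC
  have hres : proj ε (⟨x + C.im * (Real.cos α / Real.sin α), C.im⟩ : ℂ) ∈ origamiR U :=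
    proj_mem_origamiR hU h0 hα hβ hα0 hβ0 hαβ hε hε0 hD
  -- now massage the expression
  set y : ℝ := z₀.im with hydef
  set cA : ℝ := Real.cos α / Real.sin α with hcAdef
  set cG : ℝ := Real.cos γ / Real.sin γ with hcGdef
  set cD : ℝ := Real.cos δ / Real.sin δ with hcDdef
  set cE : ℝ := Real.cos ε / Real.sin ε with hcEdef
  have hcd' : cD - cG ≠ 0 := sub_ne_zero.mpr (Ne.symm hcot)
  have hPγ : proj γ z₀ = y * (cA - cG) := by rw [proj_eq, hre]; ring
  have hPδ : proj δ z₀ = y * (cA - cD) := by rw [proj_eq, hre]; ring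
  have hPε : proj ε z₀ = y * (cA - cE) := by rw [proj_eq, hre]; ring
  have hprojA : proj γ A = (u + y * cA) - y * cG := by rw [proj_eq]
  have hprojB : proj δ B = (v + y * cA) - y * cD := by rw [proj_eq]
  have hCim : C.im = ((proj γ A) - (proj δ B)) / (cD - cG) := rfl
  have heq : proj ε (⟨x + C.im * cA, C.im⟩ : ℂ)
      = x + (u - v + (proj γ z₀ - proj δ z₀)) * proj ε z₀ / (proj γ z₀ - proj δ z₀) := by
    rw [proj_eq]
    show (x + C.im * cA) - C.im * cE
        = x + (u - v + (proj γ z₀ - proj δ z₀)) * proj ε z₀ / (proj γ z₀ - proj δ z₀)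
    rw [hCim, hprojA, hprojB, hPγ, hPδ, hPε]
    have hd2 : y * (cA - cG) - y * (cA - cD) = y * (cD - cG) := by ring
    rw [hd2]
    field_simp
    ring
  rw [heq] at hres
  exact hres

lemma projs_ne {γ δ : ℝ} (hγ : γ ∈ U) (hδ : δ ∈ U) (hγ0 : γ ≠ 0) (hδ0 : δ ≠ 0) (hγδ : γ ≠ δ) :
    proj γ (inter α β 0 1) - proj δ (inter α β 0 1) ≠ 0 := by
  obtain ⟨hγ1, hγ2⟩ := mem_Ioo_of_mem hU h0 hα hβ hα0 hβ0 hαβ hγ hγ0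
  obtain ⟨hδ1, hδ2⟩ := mem_Ioo_of_mem hU h0 hα hβ hα0 hβ0 hαβ hδ hδ0
  have hsγ : Real.sin γ ≠ 0 := ne_of_gt (Real.sin_pos_of_pos_of_lt_pi hγ1 hγ2)
  have hsδ : Real.sin δ ≠ 0 := ne_of_gt (Real.sin_pos_of_pos_of_lt_pi hδ1 hδ2)
  have hcot : Real.cos γ / Real.sin γ ≠ Real.cos δ / Real.sin δ :=
    cot_ne_cot hγ1 hγ2 hδ1 hδ2 hγδ
  have him : (inter α β 0 1).im ≠ 0 := inter_im_ne hU h0 hα hβ hα0 hβ0 hαβ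
  simp only [proj]
  intro h
  apply hcot
  have h2 : (inter α β 0 1).im * (Real.cos γ / Real.sin γ)
      = (inter α β 0 1).im * (Real.cos δ / Real.sin δ) := by
    rw [mul_div_assoc, mul_div_assoc] at h
    linarith
  exact mul_left_cancel₀ him h2

end Setup

theorem closure_subset_origamiR (U : Set ℝ) (hU : U ⊆ Set.Ico 0 Real.pi) (h0 : (0 : ℝ) ∈ U)
    (hcard : 3 ≤ U.encard) (α β : ℝ) (hα : α ∈ U) (hβ : β ∈ U)
    (hα0 : α ≠ 0) (hβ0 : β ≠ 0) (hαβ : α ≠ β)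
    (Δ : Set ℝ)
    (hΔ : Δ = {x : ℝ | ∃ γ ∈ U \ {0}, ∃ δ ∈ U \ {0},
        γ ≠ δ ∧ x = proj γ (inter α β 0 1) - proj δ (inter α β 0 1)}) :
    (Subring.closure (Δ ∪ (fun d : ℝ => d⁻¹) '' Δ) : Set ℝ) ⊆ origamiR U := by
  have hzero : (0 : ℝ) ∈ origamiR U := by
    show ((0 : ℝ) : ℂ) ∈ origami U
    simpa using zero_mem_origami U
  have hone : (1 : ℝ) ∈ origamiR U := by
    show ((1 : ℝ) : ℂ) ∈ origami U
    simpa using one_mem_origami U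
  have hPα : proj α (inter α β 0 1) = 0 := (inter_spec_s11 hU h0 hα hβ hα0 hβ0 hαβ).1
  have hPβ : proj β (inter α β 0 1) = 1 := (inter_spec_s11 hU h0 hα hβ hα0 hβ0 hαβ).2
  -- the basic derived real operation, with slopes β, α, ε
  have hopβ : ∀ ε ∈ U, ε ≠ 0 → ∀ x ∈ origamiR U, ∀ u ∈ origamiR U, ∀ v ∈ origamiR U,
      x + (u - v + 1) * proj ε (inter α β 0 1) ∈ origamiR U := by
    intro ε hε hε0 x hx u hu v hv
    have h := main_op hU h0 hα hβ hα0 hβ0 hαβ hβ hα hε hβ0 hα0 hε0 (Ne.symm hαβ) hx hu hv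
    rw [hPα, hPβ] at h
    have e : x + (u - v + (1 - 0)) * proj ε (inter α β 0 1) / (1 - 0)
        = x + (u - v + 1) * proj ε (inter α β 0 1) := by ring
    rwa [e] at h
  have hPmem : ∀ ε ∈ U, ε ≠ 0 → proj ε (inter α β 0 1) ∈ origamiR U := by
    intro ε hε hε0
    have h := hopβ ε hε hε0 0 hzero 0 hzero 0 hzero
    have e : (0 : ℝ) + (0 - 0 + 1) * proj ε (inter α β 0 1) = proj ε (inter α β 0 1) := by ring
    rwa [e] at h
  -- additive structure
  have hsub3 : ∀ x ∈ origamiR U, ∀ u ∈ origamiR U, ∀ v ∈ origamiR U,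
      x + u - v ∈ origamiR U := by
    intro x hx u hu v hv
    have h1 : v + 1 ∈ origamiR U := by
      have h := hopβ β hβ hβ0 v hv 0 hzero 0 hzero
      rw [hPβ] at h
      have e : v + (0 - 0 + 1) * 1 = v + 1 := by ring
      rwa [e] at h
    have h := hopβ β hβ hβ0 x hx u hu (v + 1) h1
    rw [hPβ] at h
    have e : x + (u - (v + 1) + 1) * 1 = x + u - v := by ring
    rwa [e] at h
  have hsub : ∀ a ∈ origamiR U, ∀ b ∈ origamiR U, a - b ∈ origamiR U := by
    intro a ha b hb
    have h := hsub3 a ha 0 hzero b hb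
    have e : a + 0 - b = a - b := by ring
    rwa [e] at h
  have hadd : ∀ a ∈ origamiR U, ∀ b ∈ origamiR U, a + b ∈ origamiR U := by
    intro a ha b hb
    have h := hsub3 a ha b hb 0 hzero
    have e : a + b - 0 = a + b := by ring
    rwa [e] at h
  have hneg : ∀ a ∈ origamiR U, -a ∈ origamiR U := by
    intro a ha
    have h := hsub3 0 hzero 0 hzero a ha
    have e : (0 : ℝ) + 0 - a = -a := by ring
    rwa [e] at h
  -- multiplication by a projection
  have hmulP : ∀ ε ∈ U, ε ≠ 0 → ∀ x ∈ origamiR U,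
      x * proj ε (inter α β 0 1) ∈ origamiR U := by
    intro ε hε hε0 x hx
    have h := hopβ ε hε hε0 0 hzero x hx 0 hzero
    have e : x * proj ε (inter α β 0 1)
        = ((0 : ℝ) + (x - 0 + 1) * proj ε (inter α β 0 1)) - proj ε (inter α β 0 1) := by ring
    rw [e]
    exact hsub _ h _ (hPmem ε hε hε0)
  -- division by a difference of projections
  have hdiv : ∀ γ ∈ U, ∀ δ ∈ U, γ ≠ 0 → δ ≠ 0 → γ ≠ δ → ∀ x ∈ origamiR U,
      x / (proj γ (inter α β 0 1) - proj δ (inter α β 0 1)) ∈ origamiR U := by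
    intro γ hγ δ hδ hγ0 hδ0 hγδ x hx
    have hne : proj γ (inter α β 0 1) - proj δ (inter α β 0 1) ≠ 0 :=
      projs_ne hU h0 hα hβ hα0 hβ0 hαβ hγ hδ hγ0 hδ0 hγδ
    have h := main_op hU h0 hα hβ hα0 hβ0 hαβ hγ hδ hβ hγ0 hδ0 hβ0 hγδ hzero hx hzero
    rw [hPβ] at h
    have e : (0 : ℝ) + (x - 0 + (proj γ (inter α β 0 1) - proj δ (inter α β 0 1))) * 1
          / (proj γ (inter α β 0 1) - proj δ (inter α β 0 1))
        = x / (proj γ (inter α β 0 1) - proj δ (inter α β 0 1)) + 1 := by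
      field_simp
      ring
    rw [e] at h
    have e2 : x / (proj γ (inter α β 0 1) - proj δ (inter α β 0 1))
        = (x / (proj γ (inter α β 0 1) - proj δ (inter α β 0 1)) + 1) - 1 := by ring
    rw [e2]
    exact hsub _ h _ hone
  subst hΔ
  -- multiplication by a generator
  have hmulgen : ∀ d ∈ ({x : ℝ | ∃ γ ∈ U \ {0}, ∃ δ ∈ U \ {0},
        γ ≠ δ ∧ x = proj γ (inter α β 0 1) - proj δ (inter α β 0 1)} ∪
        (fun d : ℝ => d⁻¹) '' {x : ℝ | ∃ γ ∈ U \ {0}, ∃ δ ∈ U \ {0},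
        γ ≠ δ ∧ x = proj γ (inter α β 0 1) - proj δ (inter α β 0 1)}),
      ∀ x ∈ origamiR U, d * x ∈ origamiR U := by
    rintro d (hd | ⟨d', hd', rfl⟩) x hx
    · obtain ⟨γ, hγ, δ, hδ, hγδ, rfl⟩ := hd
      have hγ0 : γ ≠ 0 := by simpa using hγ.2
      have hδ0 : δ ≠ 0 := by simpa using hδ.2
      have e : (proj γ (inter α β 0 1) - proj δ (inter α β 0 1)) * x
          = x * proj γ (inter α β 0 1) + 0 - x * proj δ (inter α β 0 1) := by ring
      rw [e]
      exact hsub3 _ (hmulP γ hγ.1 hγ0 x hx) 0 hzero _ (hmulP δ hδ.1 hδ0 x hx)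
    · obtain ⟨γ, hγ, δ, hδ, hγδ, rfl⟩ := hd'
      have hγ0 : γ ≠ 0 := by simpa using hγ.2
      have hδ0 : δ ≠ 0 := by simpa using hδ.2
      have e : (fun d : ℝ => d⁻¹) (proj γ (inter α β 0 1) - proj δ (inter α β 0 1)) * x
          = x / (proj γ (inter α β 0 1) - proj δ (inter α β 0 1)) :=
        (div_eq_inv_mul x _).symm
      rw [e]
      exact hdiv γ hγ.1 δ hδ.1 hγ0 hδ0 hγδ x hx
  -- monoid closure
  have hmono : ∀ l : List ℝ, (∀ y ∈ l, y ∈ ({x : ℝ | ∃ γ ∈ U \ {0}, ∃ δ ∈ U \ {0},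
        γ ≠ δ ∧ x = proj γ (inter α β 0 1) - proj δ (inter α β 0 1)} ∪
        (fun d : ℝ => d⁻¹) '' {x : ℝ | ∃ γ ∈ U \ {0}, ∃ δ ∈ U \ {0},
        γ ≠ δ ∧ x = proj γ (inter α β 0 1) - proj δ (inter α β 0 1)})) →
      l.prod ∈ origamiR U := by
    intro l
    induction l with
    | nil => intro _; simpa using hone
    | cons a t ih =>
      intro h
      rw [List.prod_cons]
      exact hmulgen a (h a List.mem_cons_self) t.prod
        (ih fun y hy => h y (List.mem_cons_of_mem a hy))
  -- assemble
  intro w hw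
  have hw' : w ∈ Subring.closure ({x : ℝ | ∃ γ ∈ U \ {0}, ∃ δ ∈ U \ {0},
        γ ≠ δ ∧ x = proj γ (inter α β 0 1) - proj δ (inter α β 0 1)} ∪
        (fun d : ℝ => d⁻¹) '' {x : ℝ | ∃ γ ∈ U \ {0}, ∃ δ ∈ U \ {0},
        γ ≠ δ ∧ x = proj γ (inter α β 0 1) - proj δ (inter α β 0 1)}) := hw
  rw [Subring.mem_closure_iff] at hw'
  let G : AddSubgroup ℝ :=
    { carrier := origamiR U
      zero_mem' := hzero
      add_mem' := fun {a b} ha hb => hadd a ha b hb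
      neg_mem' := fun {a} ha => hneg a ha }
  have hle : AddSubgroup.closure ((Submonoid.closure ({x : ℝ | ∃ γ ∈ U \ {0}, ∃ δ ∈ U \ {0},
        γ ≠ δ ∧ x = proj γ (inter α β 0 1) - proj δ (inter α β 0 1)} ∪
        (fun d : ℝ => d⁻¹) '' {x : ℝ | ∃ γ ∈ U \ {0}, ∃ δ ∈ U \ {0},
        γ ≠ δ ∧ x = proj γ (inter α β 0 1) - proj δ (inter α β 0 1)}) : Submonoid ℝ) : Set ℝ)
      ≤ G := by
    rw [AddSubgroup.closure_le]
    intro y hy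
    obtain ⟨l, hl, rfl⟩ := Submonoid.exists_list_of_mem_closure hy
    exact hmono l hl
  exact hle hw'
end

section
/- If U = {0, α, β, γ} has exactly four elements with α, β, γ ∈ (0, π) distinct, then M(U) ∩ ℝ = ℤ[p, 1/p, 1/(p−1)], where p = p(γ) is the γ-projection of ⟦0,1⟧ (the intersection of 0 + ℝ·exp(iα) and 1 + ℝ·exp(iβ)). -/
open Real Complex Set

noncomputable def ogd (α β : ℝ) : ℝ := Real.cos β / Real.sin β - Real.cos α / Real.sin α

noncomputable def ogp (α β γ : ℝ) : ℝ :=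
  (Real.cos γ / Real.sin γ - Real.cos α / Real.sin α) / ogd α β

noncomputable def ogpt (α β u v : ℝ) : ℂ :=
  ⟨u + (u - v) / ogd α β * (Real.cos α / Real.sin α), (u - v) / ogd α β⟩

lemma og_sin_pos {θ : ℝ} (h : θ ∈ Set.Ioo 0 Real.pi) : 0 < Real.sin θ :=
  Real.sin_pos_of_pos_of_lt_pi h.1 h.2

lemma og_cot_ne {θ₁ θ₂ : ℝ} (h1 : θ₁ ∈ Set.Ioo 0 Real.pi) (h2 : θ₂ ∈ Set.Ioo 0 Real.pi)
    (hne : θ₁ ≠ θ₂) : Real.cos θ₁ / Real.sin θ₁ ≠ Real.cos θ₂ / Real.sin θ₂ := by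
  intro h
  have hs1 := og_sin_pos h1
  have hs2 := og_sin_pos h2
  have hcc : Real.cos θ₁ * Real.sin θ₂ = Real.cos θ₂ * Real.sin θ₁ := by
    field_simp at h; linarith
  have hz : Real.sin (θ₁ - θ₂) = 0 := by
    rw [Real.sin_sub]; linarith [hcc]
  rw [Real.sin_eq_zero_iff] at hz
  obtain ⟨n, hn⟩ := hz
  have hπ := Real.pi_pos
  have h1' : θ₁ - θ₂ < Real.pi := by cases h1; cases h2; simp_all; linarith
  have h2' : -Real.pi < θ₁ - θ₂ := by cases h1; cases h2; simp_all; linarith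
  have : n = 0 := by
    rcases lt_trichotomy n 0 with hn0 | hn0 | hn0
    · exfalso
      have hn1 : n ≤ -1 := by omega
      have : (n : ℝ) ≤ -1 := by exact_mod_cast hn1
      nlinarith [hn]
    · exact hn0
    · exfalso
      have : (1 : ℝ) ≤ (n : ℝ) := by exact_mod_cast hn0
      nlinarith [hn]
  rw [this] at hn
  simp at hn
  exact hne (by linarith)

lemma og_sub_eq (α β : ℝ) (z : ℂ) : proj α z - proj β z = z.im * ogd α β := by
  simp only [proj, ogd]; ring

lemma og_proj_pt_fst (α β u v : ℝ) : proj α (ogpt α β u v) = u := by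
  simp only [proj, ogpt]; ring

lemma og_proj_pt_snd {α β : ℝ} (hd : ogd α β ≠ 0) (u v : ℝ) : proj β (ogpt α β u v) = v := by
  have h := og_sub_eq α β (ogpt α β u v)
  rw [og_proj_pt_fst] at h
  have him : (ogpt α β u v).im = (u - v) / ogd α β := rfl
  rw [him, div_mul_cancel₀ _ hd] at h
  linarith

lemma og_proj_inj {α β : ℝ} (hd : ogd α β ≠ 0) {z w : ℂ}
    (h1 : proj α z = proj α w) (h2 : proj β z = proj β w) : z = w := by
  have ha := og_sub_eq α β z
  have hb := og_sub_eq α β w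
  have him : z.im = w.im := by
    have : z.im * ogd α β = w.im * ogd α β := by linarith
    exact mul_right_cancel₀ hd this
  have hre : z.re = w.re := by
    simp only [proj] at h1
    rw [him] at h1
    linarith
  exact Complex.ext hre him

lemma og_inter_eq {α β : ℝ} (hd : ogd α β ≠ 0) (r s : ℝ) :
    inter α β r s = ogpt α β r s := by
  have hex : ∃ z : ℂ, proj α z = r ∧ proj β z = s :=
    ⟨ogpt α β r s, og_proj_pt_fst α β r s, og_proj_pt_snd hd r s⟩
  have hsp := Classical.epsilon_spec hex
  exact og_proj_inj hd (hsp.1.trans (og_proj_pt_fst α β r s).symm)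
    (hsp.2.trans (og_proj_pt_snd hd r s).symm)

lemma og_proj_gamma {α β : ℝ} (γ : ℝ) (hd : ogd α β ≠ 0) (z : ℂ) :
    proj γ z = (1 - ogp α β γ) * proj α z + ogp α β γ * proj β z := by
  have hPd : ogp α β γ * ogd α β
      = Real.cos γ / Real.sin γ - Real.cos α / Real.sin α := div_mul_cancel₀ _ hd
  simp only [ogd] at hPd
  simp only [proj]
  linear_combination z.im * hPd

lemma og_mem_line_iff {θ : ℝ} (hθ : θ ∈ Set.Ioo 0 Real.pi) {z w : ℂ} :
    w ∈ lineThru z θ ↔ proj θ w = proj θ z := by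
  have hs : Real.sin θ ≠ 0 := (og_sin_pos hθ).ne'
  constructor
  · rintro ⟨t, rfl⟩
    simp only [proj, Complex.add_re, Complex.add_im, Complex.mul_re, Complex.mul_im,
      Complex.ofReal_re, Complex.ofReal_im, Complex.exp_ofReal_mul_I_re,
      Complex.exp_ofReal_mul_I_im]
    field_simp
    ring
  · intro h
    refine ⟨(w.im - z.im) / Real.sin θ, ?_⟩
    apply Complex.ext
    · simp only [Complex.add_re, Complex.mul_re, Complex.ofReal_re, Complex.ofReal_im,
        Complex.exp_ofReal_mul_I_re, Complex.exp_ofReal_mul_I_im]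
      simp only [proj] at h
      field_simp at h ⊢
      ring_nf
      ring_nf at h
      linarith
    · simp only [Complex.add_im, Complex.mul_im, Complex.ofReal_re, Complex.ofReal_im,
        Complex.exp_ofReal_mul_I_re, Complex.exp_ofReal_mul_I_im]
      field_simp
      ring

lemma og_mem_line_zero_iff {z w : ℂ} : w ∈ lineThru z 0 ↔ w.im = z.im := by
  constructor
  · rintro ⟨t, rfl⟩
    simp
  · intro h
    refine ⟨w.re - z.re, ?_⟩
    apply Complex.ext <;> simp [h]

lemma og_step_succ {U : Set ℝ} {θ₁ θ₂ : ℝ} (h1 : θ₁ ∈ U) (h2 : θ₂ ∈ U) (hne : θ₁ ≠ θ₂)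
    {k : ℕ} : origamiStep U k ⊆ origamiStep U (k + 1) := by
  intro z hz
  exact ⟨z, hz, z, hz, θ₁, h1, θ₂, h2, hne, ⟨0, by simp⟩, ⟨0, by simp⟩⟩

lemma og_step_mono {U : Set ℝ} {θ₁ θ₂ : ℝ} (h1 : θ₁ ∈ U) (h2 : θ₂ ∈ U) (hne : θ₁ ≠ θ₂)
    {k l : ℕ} (hkl : k ≤ l) : origamiStep U k ⊆ origamiStep U l := by
  induction hkl with
  | refl => exact subset_rfl
  | step _ ih => exact ih.trans (og_step_succ h1 h2 hne) |>.trans subset_rfl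

lemma og_origami_inter {U : Set ℝ} {θa θb : ℝ} (ha : θa ∈ U) (hb : θb ∈ U) (hab : θa ≠ θb)
    {z z' w : ℂ} (hz : z ∈ origami U) (hz' : z' ∈ origami U) {θ₁ θ₂ : ℝ}
    (h1 : θ₁ ∈ U) (h2 : θ₂ ∈ U) (hne : θ₁ ≠ θ₂)
    (hw1 : w ∈ lineThru z θ₁) (hw2 : w ∈ lineThru z' θ₂) : w ∈ origami U := by
  obtain ⟨k, hk⟩ := Set.mem_iUnion.1 hz
  obtain ⟨k', hk'⟩ := Set.mem_iUnion.1 hz'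
  refine Set.mem_iUnion.2 ⟨max k k' + 1, ?_⟩
  exact ⟨z, og_step_mono ha hb hab (le_max_left k k') hk,
    z', og_step_mono ha hb hab (le_max_right k k') hk', θ₁, h1, θ₂, h2, hne, hw1, hw2⟩

theorem origamiR_four_slopes (α β γ : ℝ) (hα : α ∈ Set.Ioo 0 Real.pi)
    (hβ : β ∈ Set.Ioo 0 Real.pi) (hγ : γ ∈ Set.Ioo 0 Real.pi)
    (hαβ : α ≠ β) (hαγ : α ≠ γ) (hβγ : β ≠ γ) :
    origamiR {0, α, β, γ} =
      (Subring.closure {proj γ (inter α β 0 1), (proj γ (inter α β 0 1))⁻¹,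
        (proj γ (inter α β 0 1) - 1)⁻¹} : Set ℝ) := by
  have hd : ogd α β ≠ 0 := by
    unfold ogd; exact sub_ne_zero.2 (og_cot_ne hβ hα hαβ.symm)
  set P := proj γ (inter α β 0 1) with hPdef
  set U : Set ℝ := {0, α, β, γ} with hU
  set R := Subring.closure {P, P⁻¹, (P - 1)⁻¹} with hR
  have hprojreal : ∀ (x : ℝ) (θ : ℝ), proj θ ((x : ℝ) : ℂ) = x := by
    intro x θ; simp [proj]
  have hP : P = ogp α β γ := by
    rw [hPdef, og_inter_eq hd, og_proj_gamma γ hd, og_proj_pt_fst, og_proj_pt_snd hd]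
    ring
  have hP0 : P ≠ 0 := by
    rw [hP]; unfold ogp
    exact div_ne_zero (sub_ne_zero.2 (og_cot_ne hγ hα hαγ.symm)) hd
  have hP1 : P ≠ 1 := by
    rw [hP]; unfold ogp
    intro h
    rw [div_eq_one_iff_eq hd] at h
    unfold ogd at h
    exact og_cot_ne hγ hβ hβγ.symm (by linarith)
  have h1mP0 : (1 : ℝ) - P ≠ 0 := sub_ne_zero.2 (Ne.symm hP1)
  have hgam : ∀ z : ℂ, proj γ z = (1 - P) * proj α z + P * proj β z := by
    intro z; rw [hP]; exact og_proj_gamma γ hd z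
  -- memberships in U
  have h0U : (0 : ℝ) ∈ U := by rw [hU]; left; rfl
  have hαU : α ∈ U := by rw [hU]; right; left; rfl
  have hβU : β ∈ U := by rw [hU]; right; right; left; rfl
  have hγU : γ ∈ U := by rw [hU]; right; right; right; rfl
  have h0α : (0 : ℝ) ≠ α := hα.1.ne
  -- generator memberships
  have hPmem : P ∈ R := Subring.subset_closure (by left; rfl)
  have hPinv : P⁻¹ ∈ R := Subring.subset_closure (by right; left; rfl)
  have hPm1inv : (P - 1)⁻¹ ∈ R := Subring.subset_closure (by right; right; rfl)
  have h1mP : (1 : ℝ) - P ∈ R := sub_mem (one_mem R) hPmem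
  have h1mPinv : ((1 : ℝ) - P)⁻¹ ∈ R := by
    rw [show (1 : ℝ) - P = -(P - 1) by ring, inv_neg]
    exact neg_mem hPm1inv
  -- equation extraction
  have eq0 : ∀ {z w : ℂ}, w ∈ lineThru z 0 → proj α w - proj β w = proj α z - proj β z := by
    intro z w h
    rw [og_mem_line_zero_iff] at h
    rw [og_sub_eq, og_sub_eq, h]
  have eqA : ∀ {z w : ℂ}, w ∈ lineThru z α → proj α w = proj α z :=
    fun h => (og_mem_line_iff hα).1 h
  have eqB : ∀ {z w : ℂ}, w ∈ lineThru z β → proj β w = proj β z :=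
    fun h => (og_mem_line_iff hβ).1 h
  have eqG : ∀ {z w : ℂ}, w ∈ lineThru z γ →
      (1 - P) * proj α w + P * proj β w = (1 - P) * proj α z + P * proj β z := by
    intro z w h
    have h' := (og_mem_line_iff hγ).1 h
    rw [hgam w, hgam z] at h'
    exact h'
  -- FORWARD: all origami points have coordinates in R
  have key : ∀ k, ∀ z ∈ origamiStep U k, proj α z ∈ R ∧ proj β z ∈ R := by
    intro k
    induction k with
    | zero =>
      intro z hz
      simp only [origamiStep, Set.mem_insert_iff, Set.mem_singleton_iff] at hz
      rcases hz with rfl | rfl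
      · constructor <;> · simp only [proj, Complex.zero_re, Complex.zero_im]
                          norm_num
      · constructor <;> · simp only [proj, Complex.one_re, Complex.one_im]
                          norm_num
    | succ k ih =>
      intro w hw
      simp only [origamiStep, Set.mem_setOf_eq] at hw
      obtain ⟨z, hz, z', hz', θ₁, hθ₁, θ₂, hθ₂, hne, hw1, hw2⟩ := hw
      obtain ⟨hu, hv⟩ := ih z hz
      obtain ⟨hu', hv'⟩ := ih z' hz'
      rw [hU] at hθ₁ hθ₂
      simp only [Set.mem_insert_iff, Set.mem_singleton_iff] at hθ₁ hθ₂
      obtain h1' | h1' | h1' | h1' := hθ₁ <;> obtain h2' | h2' | h2' | h2' := hθ₂ <;>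
        rw [h1'] at hw1 <;> rw [h2'] at hw2 <;> rw [h1', h2'] at hne
      -- (0,0)
      · exact absurd rfl hne
      -- (0,α)
      · have e1 := eq0 hw1; have e2 := eqA hw2
        refine ⟨by rw [e2]; exact hu', ?_⟩
        have h3 : proj β w = proj α z' - (proj α z - proj β z) := by linarith
        rw [h3]; exact sub_mem hu' (sub_mem hu hv)
      -- (0,β)
      · have e1 := eq0 hw1; have e2 := eqB hw2
        refine ⟨?_, by rw [e2]; exact hv'⟩
        have h3 : proj α w = proj β z' + (proj α z - proj β z) := by linarith
        rw [h3]; exact add_mem hv' (sub_mem hu hv)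
      -- (0,γ)
      · have e1 := eq0 hw1; have e2 := eqG hw2
        constructor
        · have h3 : proj α w = ((1 - P) * proj α z' + P * proj β z')
              + P * (proj α z - proj β z) := by linear_combination e2 + P * e1
          rw [h3]
          exact add_mem (add_mem (mul_mem h1mP hu') (mul_mem hPmem hv'))
            (mul_mem hPmem (sub_mem hu hv))
        · have h3 : proj β w = ((1 - P) * proj α z' + P * proj β z')
              - (1 - P) * (proj α z - proj β z) := by linear_combination e2 - (1 - P) * e1
          rw [h3]
          exact sub_mem (add_mem (mul_mem h1mP hu') (mul_mem hPmem hv'))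
            (mul_mem h1mP (sub_mem hu hv))
      -- (α,0)
      · have e1 := eqA hw1; have e2 := eq0 hw2
        refine ⟨by rw [e1]; exact hu, ?_⟩
        have h3 : proj β w = proj α z - (proj α z' - proj β z') := by linarith
        rw [h3]; exact sub_mem hu (sub_mem hu' hv')
      -- (α,α)
      · exact absurd rfl hne
      -- (α,β)
      · have e1 := eqA hw1; have e2 := eqB hw2
        exact ⟨by rw [e1]; exact hu, by rw [e2]; exact hv'⟩
      -- (α,γ)
      · have e1 := eqA hw1; have e2 := eqG hw2
        refine ⟨by rw [e1]; exact hu, ?_⟩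
        have h3 : P * proj β w = ((1 - P) * proj α z' + P * proj β z')
            - (1 - P) * proj α z := by linear_combination e2 - (1 - P) * e1
        have h4 : proj β w = P⁻¹ * (P * proj β w) := (inv_mul_cancel_left₀ hP0 _).symm
        rw [h4, h3]
        exact mul_mem hPinv (sub_mem (add_mem (mul_mem h1mP hu') (mul_mem hPmem hv'))
          (mul_mem h1mP hu))
      -- (β,0)
      · have e1 := eqB hw1; have e2 := eq0 hw2
        refine ⟨?_, by rw [e1]; exact hv⟩
        have h3 : proj α w = proj β z + (proj α z' - proj β z') := by linarith
        rw [h3]; exact add_mem hv (sub_mem hu' hv')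
      -- (β,α)
      · have e1 := eqB hw1; have e2 := eqA hw2
        exact ⟨by rw [e2]; exact hu', by rw [e1]; exact hv⟩
      -- (β,β)
      · exact absurd rfl hne
      -- (β,γ)
      · have e1 := eqB hw1; have e2 := eqG hw2
        refine ⟨?_, by rw [e1]; exact hv⟩
        have h3 : (1 - P) * proj α w = ((1 - P) * proj α z' + P * proj β z')
            - P * proj β z := by linear_combination e2 - P * e1
        have h4 : proj α w = (1 - P)⁻¹ * ((1 - P) * proj α w) :=
          (inv_mul_cancel_left₀ h1mP0 _).symm
        rw [h4, h3]
        exact mul_mem h1mPinv (sub_mem (add_mem (mul_mem h1mP hu') (mul_mem hPmem hv'))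
          (mul_mem hPmem hv))
      -- (γ,0)
      · have e1 := eqG hw1; have e2 := eq0 hw2
        constructor
        · have h3 : proj α w = ((1 - P) * proj α z + P * proj β z)
              + P * (proj α z' - proj β z') := by linear_combination e1 + P * e2
          rw [h3]
          exact add_mem (add_mem (mul_mem h1mP hu) (mul_mem hPmem hv))
            (mul_mem hPmem (sub_mem hu' hv'))
        · have h3 : proj β w = ((1 - P) * proj α z + P * proj β z)
              - (1 - P) * (proj α z' - proj β z') := by linear_combination e1 - (1 - P) * e2
          rw [h3]
          exact sub_mem (add_mem (mul_mem h1mP hu) (mul_mem hPmem hv))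
            (mul_mem h1mP (sub_mem hu' hv'))
      -- (γ,α)
      · have e1 := eqG hw1; have e2 := eqA hw2
        refine ⟨by rw [e2]; exact hu', ?_⟩
        have h3 : P * proj β w = ((1 - P) * proj α z + P * proj β z)
            - (1 - P) * proj α z' := by linear_combination e1 - (1 - P) * e2
        have h4 : proj β w = P⁻¹ * (P * proj β w) := (inv_mul_cancel_left₀ hP0 _).symm
        rw [h4, h3]
        exact mul_mem hPinv (sub_mem (add_mem (mul_mem h1mP hu) (mul_mem hPmem hv))
          (mul_mem h1mP hu'))
      -- (γ,β)
      · have e1 := eqG hw1; have e2 := eqB hw2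
        refine ⟨?_, by rw [e2]; exact hv'⟩
        have h3 : (1 - P) * proj α w = ((1 - P) * proj α z + P * proj β z)
            - P * proj β z' := by linear_combination e1 - P * e2
        have h4 : proj α w = (1 - P)⁻¹ * ((1 - P) * proj α w) :=
          (inv_mul_cancel_left₀ h1mP0 _).symm
        rw [h4, h3]
        exact mul_mem h1mPinv (sub_mem (add_mem (mul_mem h1mP hu) (mul_mem hPmem hv))
          (mul_mem hPmem hv'))
      -- (γ,γ)
      · exact absurd rfl hne
  -- REVERSE: basic points
  have h0M : ((0 : ℝ) : ℂ) ∈ origami U := by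
    refine Set.mem_iUnion.2 ⟨0, ?_⟩
    simp only [origamiStep, Complex.ofReal_zero]
    exact Set.mem_insert _ _
  have h1M : ((1 : ℝ) : ℂ) ∈ origami U := by
    refine Set.mem_iUnion.2 ⟨0, ?_⟩
    simp only [origamiStep, Complex.ofReal_one]
    exact Set.mem_insert_of_mem _ rfl
  have realizeS : ∀ {w : ℂ}, w ∈ origami U → ∀ θ, θ ∈ Set.Ioo 0 Real.pi → θ ∈ U →
      ((proj θ w : ℝ) : ℂ) ∈ origami U := by
    intro w hw θ hθIoo hθU
    refine og_origami_inter h0U hαU h0α hw h0M hθU h0U hθIoo.1.ne' ?_ ?_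
    · exact (og_mem_line_iff hθIoo).2 (by rw [hprojreal])
    · exact og_mem_line_zero_iff.2 (by simp)
  have ptM : ∀ {x y : ℝ}, ((x : ℝ) : ℂ) ∈ origami U → ((y : ℝ) : ℂ) ∈ origami U →
      ogpt α β x y ∈ origami U := by
    intro x y hx hy
    refine og_origami_inter h0U hαU h0α hx hy hαU hβU hαβ ?_ ?_
    · exact (og_mem_line_iff hα).2 (by rw [og_proj_pt_fst, hprojreal])
    · exact (og_mem_line_iff hβ).2 (by rw [og_proj_pt_snd hd, hprojreal])
  -- operations on S = origamiR U
  have opf : ∀ {x y : ℝ}, ((x : ℝ) : ℂ) ∈ origami U → ((y : ℝ) : ℂ) ∈ origami U →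
      (((1 - P) * x + P * y : ℝ) : ℂ) ∈ origami U := by
    intro x y hx hy
    have h1 := realizeS (ptM hx hy) γ hγ hγU
    rwa [hgam, og_proj_pt_fst, og_proj_pt_snd hd] at h1
  have opg : ∀ {x x' y' : ℝ}, ((x : ℝ) : ℂ) ∈ origami U → ((x' : ℝ) : ℂ) ∈ origami U →
      ((y' : ℝ) : ℂ) ∈ origami U → ((x - x' + y' : ℝ) : ℂ) ∈ origami U := by
    intro x x' y' hx hx' hy'
    have hw : ogpt α β x (x - x' + y') ∈ origami U := by
      refine og_origami_inter h0U hαU h0α hx (ptM hx' hy') hαU h0U hα.1.ne' ?_ ?_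
      · exact (og_mem_line_iff hα).2 (by rw [og_proj_pt_fst, hprojreal])
      · refine og_mem_line_zero_iff.2 ?_
        show (x - (x - x' + y')) / ogd α β = (x' - y') / ogd α β
        ring_nf
    have h1 := realizeS hw β hβ hβU
    rwa [og_proj_pt_snd hd] at h1
  have opq : ∀ {x : ℝ}, ((x : ℝ) : ℂ) ∈ origami U →
      (((1 - P) * P⁻¹ * x : ℝ) : ℂ) ∈ origami U := by
    intro x hx
    have hw : ogpt α β 0 ((1 - P) * P⁻¹ * x) ∈ origami U := by
      refine og_origami_inter h0U hαU h0α (ptM hx h0M) h0M hγU hαU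
        (fun h => hαγ h.symm) ?_ ?_
      · refine (og_mem_line_iff hγ).2 ?_
        rw [hgam, hgam, og_proj_pt_fst, og_proj_pt_snd hd, og_proj_pt_fst, og_proj_pt_snd hd]
        field_simp
        ring
      · exact (og_mem_line_iff hα).2 (by rw [og_proj_pt_fst, hprojreal])
    have h1 := realizeS hw β hβ hβU
    rwa [og_proj_pt_snd hd] at h1
  have opr : ∀ {x : ℝ}, ((x : ℝ) : ℂ) ∈ origami U →
      ((P * (1 - P)⁻¹ * x : ℝ) : ℂ) ∈ origami U := by
    intro x hx
    have hw : ogpt α β (P * (1 - P)⁻¹ * x) 0 ∈ origami U := by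
      refine og_origami_inter h0U hαU h0α (ptM h0M hx) h0M hγU hβU
        (fun h => hβγ h.symm) ?_ ?_
      · refine (og_mem_line_iff hγ).2 ?_
        rw [hgam, hgam, og_proj_pt_fst, og_proj_pt_snd hd, og_proj_pt_fst, og_proj_pt_snd hd]
        field_simp
        ring
      · exact (og_mem_line_iff hβ).2 (by rw [og_proj_pt_snd hd, hprojreal])
    have h1 := realizeS hw α hα hαU
    rwa [og_proj_pt_fst] at h1
  -- derived ring-ish operations
  have opadd : ∀ {x y : ℝ}, ((x : ℝ) : ℂ) ∈ origami U → ((y : ℝ) : ℂ) ∈ origami U →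
      ((x + y : ℝ) : ℂ) ∈ origami U := by
    intro x y hx hy
    have h := opg hx h0M hy
    rwa [show x - 0 + y = x + y by ring] at h
  have opneg : ∀ {x : ℝ}, ((x : ℝ) : ℂ) ∈ origami U → ((-x : ℝ) : ℂ) ∈ origami U := by
    intro x hx
    have h := opg h0M hx h0M
    rwa [show (0 : ℝ) - x + 0 = -x by ring] at h
  have opP : ∀ {x : ℝ}, ((x : ℝ) : ℂ) ∈ origami U → ((P * x : ℝ) : ℂ) ∈ origami U := by
    intro x hx
    have h := opf h0M hx
    rwa [show (1 - P) * 0 + P * x = P * x by ring] at h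
  have opPinv : ∀ {x : ℝ}, ((x : ℝ) : ℂ) ∈ origami U → ((P⁻¹ * x : ℝ) : ℂ) ∈ origami U := by
    intro x hx
    have h := opadd (opq hx) hx
    rwa [show (1 - P) * P⁻¹ * x + x = P⁻¹ * x by field_simp; ring] at h
  have opPm1inv : ∀ {x : ℝ}, ((x : ℝ) : ℂ) ∈ origami U →
      (((P - 1)⁻¹ * x : ℝ) : ℂ) ∈ origami U := by
    intro x hx
    have h := opadd (opneg (opr hx)) (opneg hx)
    rwa [show -(P * (1 - P)⁻¹ * x) + -x = (P - 1)⁻¹ * x by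
      rw [show (P - 1)⁻¹ = -(1 - P)⁻¹ by rw [show P - 1 = -(1 - P) by ring, inv_neg]]
      field_simp
      ring] at h
  -- conclusion
  ext x
  simp only [origamiR, Set.mem_setOf_eq, SetLike.mem_coe]
  constructor
  · intro hx
    obtain ⟨k, hk⟩ := Set.mem_iUnion.1 hx
    have h := (key k _ hk).1
    rwa [hprojreal] at h
  · intro hx
    rw [Subring.mem_closure_iff] at hx
    refine AddSubgroup.closure_induction ?_ ?_ ?_ ?_ hx
    · intro y hy
      obtain ⟨l, hl, rfl⟩ := Submonoid.exists_list_of_mem_closure hy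
      clear hy
      induction l with
      | nil => simpa using h1M
      | cons a l ihl =>
        have hprod := ihl (fun y hy => hl y (List.mem_cons_of_mem _ hy))
        have ha := hl a (List.mem_cons_self)
        rw [List.prod_cons]
        rcases ha with rfl | rfl | rfl
        · exact opP hprod
        · exact opPinv hprod
        · exact opPm1inv hprod
    · simpa using h0M
    · intro a b _ _ ha hb
      exact_mod_cast opadd ha hb
    · intro a _ ha
      exact_mod_cast opneg ha
end

section
/- Let α, β ∈ (0, π) be distinct. Then the product ⟦0,1⟧·⟦1,0⟧ has α-projection sin²(β)/sin²(α−β) and β-projection sin²(α)/sin²(α−β), i.e. ⟦0,1⟧·⟦1,0⟧ = ⟦sin²β/sin²(α−β), sin²α/sin²(α−β)⟧. -/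
open Real Complex Set

lemma inter_exists (α β : ℝ) (hsa : Real.sin α ≠ 0) (hsb : Real.sin β ≠ 0)
    (hd : Real.sin (α - β) ≠ 0) (r s : ℝ) :
    ∃ z : ℂ, proj α z = r ∧ proj β z = s := by
  refine ⟨⟨r + (r - s) * Real.sin α * Real.sin β / Real.sin (α - β) * Real.cos α / Real.sin α,
      (r - s) * Real.sin α * Real.sin β / Real.sin (α - β)⟩, ?_, ?_⟩
  · simp only [proj]
    field_simp
    ring
  · simp only [proj]
    field_simp
    rw [Real.sin_sub]
    ring

lemma proj_unique (α β : ℝ) (hsa : Real.sin α ≠ 0) (hsb : Real.sin β ≠ 0)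
    (hd : Real.sin (α - β) ≠ 0) {z w : ℂ}
    (h1 : proj α z = proj α w) (h2 : proj β z = proj β w) : z = w := by
  simp only [proj] at h1 h2
  rw [Real.sin_sub] at hd
  have him : z.im = w.im := by
    have h1' : (z.re - w.re) * Real.sin α = (z.im - w.im) * Real.cos α := by
      field_simp at h1; linarith
    have h2' : (z.re - w.re) * Real.sin β = (z.im - w.im) * Real.cos β := by
      field_simp at h2; linarith
    have key : (z.im - w.im) * (Real.sin α * Real.cos β - Real.cos α * Real.sin β) = 0 := by
      linear_combination Real.sin β * h1' - Real.sin α * h2'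
    rcases mul_eq_zero.1 key with h | h
    · linarith
    · exact absurd h hd
  have hre : z.re = w.re := by
    rw [him] at h1
    field_simp at h1
    exact mul_right_cancel₀ hsa (by linarith)
  exact Complex.ext hre him


theorem inter_mul_explicit (α β : ℝ) (hα : α ∈ Set.Ioo 0 Real.pi)
    (hβ : β ∈ Set.Ioo 0 Real.pi) (hαβ : α ≠ β) :
    inter α β 0 1 * inter α β 1 0 =
      inter α β (Real.sin β ^ 2 / Real.sin (α - β) ^ 2)
                (Real.sin α ^ 2 / Real.sin (α - β) ^ 2) := by
  obtain ⟨hα0, hαπ⟩ := hα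
  obtain ⟨hβ0, hβπ⟩ := hβ
  have hsa : Real.sin α ≠ 0 := ne_of_gt (Real.sin_pos_of_pos_of_lt_pi hα0 hαπ)
  have hsb : Real.sin β ≠ 0 := ne_of_gt (Real.sin_pos_of_pos_of_lt_pi hβ0 hβπ)
  have hd : Real.sin (α - β) ≠ 0 := by
    intro h
    rw [Real.sin_eq_zero_iff_of_lt_of_lt (by linarith) (by linarith)] at h
    exact hαβ (by linarith)
  have hd2 : Real.sin α * Real.cos β - Real.cos α * Real.sin β ≠ 0 := by
    rw [← Real.sin_sub]; exact hd
  set e1 : ℂ := ⟨-Real.sin β * Real.cos α / Real.sin (α - β),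
      -Real.sin β * Real.sin α / Real.sin (α - β)⟩ with he1
  set e2 : ℂ := ⟨Real.sin α * Real.cos β / Real.sin (α - β),
      Real.sin α * Real.sin β / Real.sin (α - β)⟩ with he2
  have hp1a : proj α e1 = 0 := by
    simp only [proj, he1]; field_simp; ring
  have hp1b : proj β e1 = 1 := by
    simp only [proj, he1]; field_simp; rw [Real.sin_sub]; ring
  have hp2a : proj α e2 = 1 := by
    simp only [proj, he2]; rw [Real.sin_sub]; field_simp
  have hp2b : proj β e2 = 0 := by
    simp only [proj, he2]; field_simp; ring
  have hz1 := Classical.epsilon_spec (inter_exists α β hsa hsb hd 0 1)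
  have hz2 := Classical.epsilon_spec (inter_exists α β hsa hsb hd 1 0)
  have hE1 : inter α β 0 1 = e1 :=
    proj_unique α β hsa hsb hd (hz1.1.trans hp1a.symm) (hz1.2.trans hp1b.symm)
  have hE2 : inter α β 1 0 = e2 :=
    proj_unique α β hsa hsb hd (hz2.1.trans hp2a.symm) (hz2.2.trans hp2b.symm)
  have hpya := Real.sin_sq_add_cos_sq α
  have hpyb := Real.sin_sq_add_cos_sq β
  have hPa : proj α (e1 * e2) = Real.sin β ^ 2 / Real.sin (α - β) ^ 2 := by
    simp only [proj, he1, he2, Complex.mul_re, Complex.mul_im]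
    field_simp
    linear_combination Real.sin β * hpya
  have hPb : proj β (e1 * e2) = Real.sin α ^ 2 / Real.sin (α - β) ^ 2 := by
    simp only [proj, he1, he2, Complex.mul_re, Complex.mul_im]
    field_simp
    linear_combination Real.sin α * hpyb
  have hex : ∃ z : ℂ, proj α z = Real.sin β ^ 2 / Real.sin (α - β) ^ 2 ∧
      proj β z = Real.sin α ^ 2 / Real.sin (α - β) ^ 2 := ⟨e1 * e2, hPa, hPb⟩
  have hz3 := Classical.epsilon_spec hex
  rw [hE1, hE2]
  exact proj_unique α β hsa hsb hd (hPa.trans hz3.1.symm) (hPb.trans hz3.2.symm)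
end

section
/- Let α, β, γ ∈ (0, π) with α ≠ β, and let p(γ) be the γ-projection of ⟦0,1⟧ (the intersection of 0 + ℝ·exp(iα) and 1 + ℝ·exp(iβ)). Then p(γ) = sin(α−γ)·sin(β) / (sin(α−β)·sin(γ)). -/
open Real Complex Set

theorem p_gamma_explicit (α β γ : ℝ) (hα : α ∈ Set.Ioo 0 Real.pi)
    (hβ : β ∈ Set.Ioo 0 Real.pi) (hγ : γ ∈ Set.Ioo 0 Real.pi) (hαβ : α ≠ β) :
    proj γ (inter α β 0 1) =
      Real.sin (α - γ) * Real.sin β / (Real.sin (α - β) * Real.sin γ) := by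
  obtain ⟨hα0, hαπ⟩ := hα
  obtain ⟨hβ0, hβπ⟩ := hβ
  obtain ⟨hγ0, hγπ⟩ := hγ
  have hsa : Real.sin α ≠ 0 := ne_of_gt (Real.sin_pos_of_pos_of_lt_pi hα0 hαπ)
  have hsb : Real.sin β ≠ 0 := ne_of_gt (Real.sin_pos_of_pos_of_lt_pi hβ0 hβπ)
  have hsg : Real.sin γ ≠ 0 := ne_of_gt (Real.sin_pos_of_pos_of_lt_pi hγ0 hγπ)
  have hsab : Real.sin (α - β) ≠ 0 := by
    have h1 : Real.sin α * Real.cos β - Real.cos α * Real.sin β ≠ 0 := by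
      intro h
      have : Real.sin (α - β) = 0 := by rw [Real.sin_sub]; linarith
      have h2 := Real.sin_eq_zero_iff_of_lt_of_lt (x := α - β) (by linarith) (by linarith)
      exact hαβ (by linarith [h2.mp this])
    rw [Real.sin_sub]; exact h1
  have hex : ∃ z : ℂ, proj α z = 0 ∧ proj β z = 1 := by
    refine ⟨⟨-(Real.cos α * Real.sin β) / Real.sin (α - β),
      -(Real.sin α * Real.sin β) / Real.sin (α - β)⟩, ?_, ?_⟩
    · simp only [proj]
      field_simp
      ring
    · simp only [proj]
      rw [Real.sin_sub] at *
      field_simp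
      ring
  have hspec : proj α (inter α β 0 1) = 0 ∧ proj β (inter α β 0 1) = 1 :=
    Classical.epsilon_spec hex
  set x := (inter α β 0 1).re with hx
  set y := (inter α β 0 1).im with hy
  obtain ⟨h1, h2⟩ := hspec
  simp only [proj, ← hx, ← hy] at h1 h2 ⊢
  have e1 : x * Real.sin α - y * Real.cos α = 0 := by
    field_simp at h1; linarith
  have e2 : x * Real.sin β - y * Real.cos β = Real.sin β := by
    field_simp at h2; linarith
  have hy2 : y * Real.sin (α - β) = -(Real.sin α * Real.sin β) := by
    rw [Real.sin_sub]; linear_combination Real.sin β * e1 - Real.sin α * e2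
  have hx2 : x * Real.sin (α - β) = -(Real.sin β * Real.cos α) := by
    rw [Real.sin_sub]; linear_combination Real.cos β * e1 - Real.cos α * e2
  rw [Real.sin_sub α γ]
  field_simp
  rw [Real.sin_sub] at hx2 hy2 ⊢
  linear_combination Real.sin γ * hx2 - Real.cos γ * hy2
end

section
/- If the set U ⊆ [0, π) of prescribed slopes contains 0, π/3 and 2π/3, then the origami set M(U) is a subring of ℂ. Consequently, every origami set M(U) is contained in an origami ring, namely M(U ∪ {π/3, 2π/3}). -/
open Real Complex Set

noncomputable def zc : ℂ := Complex.exp ((Real.pi / 3 : ℝ) * Complex.I)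
noncomputable def wc : ℂ := Complex.exp ((2 * Real.pi / 3 : ℝ) * Complex.I)

lemma zc_def : Complex.exp ((Real.pi / 3 : ℝ) * Complex.I) = zc := rfl
lemma wc_def : Complex.exp ((2 * Real.pi / 3 : ℝ) * Complex.I) = wc := rfl

lemma zc_eq : zc = (↑(1/2 : ℝ) + ↑(Real.sqrt 3 / 2 : ℝ) * Complex.I) := by
  unfold zc
  rw [show ((Real.pi / 3 : ℝ) : ℂ) * Complex.I = (↑(Real.pi/3)) * Complex.I from rfl,
    Complex.exp_mul_I, ← Complex.ofReal_cos, ← Complex.ofReal_sin,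
    Real.cos_pi_div_three, Real.sin_pi_div_three]

lemma wc_eq : wc = (↑(-(1/2) : ℝ) + ↑(Real.sqrt 3 / 2 : ℝ) * Complex.I) := by
  unfold wc
  rw [Complex.exp_mul_I, ← Complex.ofReal_cos, ← Complex.ofReal_sin,
    show (2 * Real.pi / 3 : ℝ) = Real.pi - Real.pi / 3 by ring,
    Real.cos_pi_sub, Real.sin_pi_sub, Real.cos_pi_div_three, Real.sin_pi_div_three]

lemma zc_sub_wc : zc - wc = 1 := by
  rw [zc_eq, wc_eq]; push_cast; ring

lemma sq3 : ((Real.sqrt 3 : ℝ) : ℂ) ^ 2 = 3 := by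
  norm_cast
  rw [Real.sq_sqrt] <;> norm_num

lemma zc_sq : zc ^ 2 = zc - 1 := by
  rw [zc_eq]
  push_cast
  linear_combination (Complex.I^2/4) * sq3 + (3/4 : ℂ) * Complex.I_sq

lemma rep_zw (x : ℂ) : ∃ a b : ℝ, x = ↑a * zc + ↑b * wc := by
  have hs : Real.sqrt 3 ≠ 0 := by positivity
  refine ⟨x.re + x.im / Real.sqrt 3, -x.re + x.im / Real.sqrt 3, ?_⟩
  rw [zc_eq, wc_eq, Complex.ext_iff]
  constructor
  · simp
    ring
  · simp
    field_simp
    ring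

lemma rep_1z (x : ℂ) : ∃ c d : ℝ, x = ↑c + ↑d * zc := by
  have hs : Real.sqrt 3 ≠ 0 := by positivity
  refine ⟨x.re - x.im / Real.sqrt 3, 2 * x.im / Real.sqrt 3, ?_⟩
  rw [zc_eq, Complex.ext_iff]
  constructor
  · simp
    ring
  · simp
    field_simp

section ops
variable {U : Set ℝ} (hU0 : (0:ℝ) ∈ U) (hU1 : Real.pi / 3 ∈ U) (hU2 : 2 * Real.pi / 3 ∈ U)

lemma ne01 : (0:ℝ) ≠ Real.pi / 3 := by have := Real.pi_pos; intro h; linarith [h]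
lemma ne02 : (0:ℝ) ≠ 2 * Real.pi / 3 := by have := Real.pi_pos; intro h; linarith [h]
lemma ne12 : Real.pi / 3 ≠ 2 * Real.pi / 3 := by have := Real.pi_pos; intro h; linarith [h]

lemma mem_zero : (0:ℂ) ∈ origami U := Set.mem_iUnion.2 ⟨0, by simp [origamiStep]⟩
lemma mem_one : (1:ℂ) ∈ origami U := Set.mem_iUnion.2 ⟨0, by simp [origamiStep]⟩

include hU0 hU1 in
lemma step_succ {z : ℂ} {k : ℕ} (hz : z ∈ origamiStep U k) : z ∈ origamiStep U (k+1) := by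
  refine ⟨z, hz, z, hz, 0, hU0, Real.pi/3, hU1, ne01, ⟨0, by simp⟩, ⟨0, by simp⟩⟩

include hU0 hU1 in
lemma step_mono {k l : ℕ} (h : k ≤ l) : origamiStep U k ⊆ origamiStep U l := by
  induction l with
  | zero => simpa [Nat.le_zero.mp h]
  | succ n ih =>
    rcases Nat.lt_or_ge k (n+1) with h' | h'
    · exact fun z hz => step_succ hU0 hU1 (ih (Nat.lt_succ_iff.mp h') hz)
    · have : k = n + 1 := le_antisymm h h'
      subst this; exact fun z hz => hz

include hU0 hU1 in
lemma mem_combine {z z' w : ℂ} {γ γ' : ℝ} (hz : z ∈ origami U) (hz' : z' ∈ origami U)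
    (hγ : γ ∈ U) (hγ' : γ' ∈ U) (hne : γ ≠ γ')
    (h1 : w ∈ lineThru z γ) (h2 : w ∈ lineThru z' γ') : w ∈ origami U := by
  obtain ⟨k, hk⟩ := Set.mem_iUnion.1 hz
  obtain ⟨k', hk'⟩ := Set.mem_iUnion.1 hz'
  exact Set.mem_iUnion.2 ⟨max k k' + 1,
    ⟨z, step_mono hU0 hU1 (le_max_left k k') hk,
     z', step_mono hU0 hU1 (le_max_right k k') hk', γ, hγ, γ', hγ', hne, h1, h2⟩⟩

end ops

lemma exp0 : Complex.exp (((0:ℝ):ℂ) * Complex.I) = 1 := by norm_num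

section ops2
variable {U : Set ℝ} (hU0 : (0:ℝ) ∈ U) (hU1 : Real.pi / 3 ∈ U) (hU2 : 2 * Real.pi / 3 ∈ U)
variable {a b c d : ℝ}

include hU0 hU1 hU2 in
/-- f(p,q) = (a_q, b_p) : line(p, π/3) ∩ line(q, 2π/3) -/
lemma op_f (hp : (↑a * zc + ↑b * wc) ∈ origami U) (hq : (↑c * zc + ↑d * wc) ∈ origami U) :
    (↑c * zc + ↑b * wc) ∈ origami U := by
  refine mem_combine hU0 hU1 hp hq hU1 hU2 ne12 ⟨c - a, ?_⟩ ⟨b - d, ?_⟩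
  · rw [zc_def]; push_cast; ring
  · rw [wc_def]; push_cast; ring

include hU0 hU1 hU2 in
/-- g(p,q) = (a_q, a_p + b_p - a_q) : line(p, 0) ∩ line(q, 2π/3) -/
lemma op_g (hp : (↑a * zc + ↑b * wc) ∈ origami U) (hq : (↑c * zc + ↑d * wc) ∈ origami U) :
    (↑c * zc + ↑(a + b - c) * wc) ∈ origami U := by
  refine mem_combine hU0 hU1 hp hq hU0 hU2 ne02 ⟨c - a, ?_⟩ ⟨a + b - c - d, ?_⟩
  · rw [exp0]; push_cast; linear_combination ((c:ℂ) - a) * zc_sub_wc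
  · rw [wc_def]; push_cast; ring

include hU0 hU1 hU2 in
/-- h(p,q) = (a_p + b_p - b_q, b_q) : line(p, 0) ∩ line(q, π/3) -/
lemma op_h (hp : (↑a * zc + ↑b * wc) ∈ origami U) (hq : (↑c * zc + ↑d * wc) ∈ origami U) :
    (↑(a + b - d) * zc + ↑d * wc) ∈ origami U := by
  refine mem_combine hU0 hU1 hp hq hU0 hU1 ne01 ⟨b - d, ?_⟩ ⟨a + b - d - c, ?_⟩
  · rw [exp0]; push_cast; linear_combination ((b:ℂ) - d) * zc_sub_wc
  · rw [zc_def]; push_cast; ring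

lemma h0r : (↑(0:ℝ) * zc + ↑(0:ℝ) * wc) ∈ origami U := by
  simpa using (mem_zero : (0:ℂ) ∈ origami U)

end ops2

section ops3
variable {U : Set ℝ} (hU0 : (0:ℝ) ∈ U) (hU1 : Real.pi / 3 ∈ U) (hU2 : 2 * Real.pi / 3 ∈ U)
variable {a b c d : ℝ}

include hU0 hU1 hU2 in
lemma neg_rep (hp : (↑a * zc + ↑b * wc) ∈ origami U) :
    (↑(-a) * zc + ↑(-b) * wc) ∈ origami U := by
  have t1 := op_f hU0 hU1 hU2 h0r hp
  have t2 := op_g hU0 hU1 hU2 t1 h0r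
  have t3 := op_h hU0 hU1 hU2 h0r t2
  have u1 := op_f hU0 hU1 hU2 hp h0r
  have u2 := op_h hU0 hU1 hU2 u1 h0r
  have u3 := op_g hU0 hU1 hU2 h0r u2
  have res := op_f hU0 hU1 hU2 u3 t3
  have e : (↑(-a) * zc + ↑(-b) * wc : ℂ)
      = ↑(0 + 0 - (a + 0 - 0)) * zc + ↑(0 + 0 - (0 + b - 0)) * wc := by push_cast; ring
  rw [e]; exact res

include hU0 hU1 hU2 in
lemma add_rep (hp : (↑a * zc + ↑b * wc) ∈ origami U) (hq : (↑c * zc + ↑d * wc) ∈ origami U) :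
    (↑(a + c) * zc + ↑(b + d) * wc) ∈ origami U := by
  have qt1 := op_f hU0 hU1 hU2 h0r hq
  have qt2 := op_g hU0 hU1 hU2 qt1 h0r
  have w1 := neg_rep hU0 hU1 hU2 qt2
  have t1 := op_f hU0 hU1 hU2 h0r hp
  have X0 := op_h hU0 hU1 hU2 t1 w1
  have u1 := op_f hU0 hU1 hU2 hp h0r
  have u2 := op_h hU0 hU1 hU2 u1 h0r
  have qu1 := op_f hU0 hU1 hU2 hq h0r
  have qu2 := op_h hU0 hU1 hU2 qu1 h0r
  have qneg := neg_rep hU0 hU1 hU2 qu2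
  have Y0 := op_g hU0 hU1 hU2 u2 qneg
  have res := op_f hU0 hU1 hU2 Y0 X0
  have e : ((↑(a+c) : ℂ) * zc + ↑(b+d) * wc)
      = ↑(a + 0 - -(c + 0 - 0)) * zc + ↑(0 + b - 0 + 0 - -(0 + d - 0)) * wc := by
    push_cast; ring
  rw [e]; exact res

include hU0 hU1 hU2 in
lemma mem_add {x y : ℂ} (hx : x ∈ origami U) (hy : y ∈ origami U) : x + y ∈ origami U := by
  obtain ⟨a, b, hab⟩ := rep_zw x
  obtain ⟨c, d, hcd⟩ := rep_zw y
  subst hab hcd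
  have h := add_rep hU0 hU1 hU2 hx hy
  have e : ((a:ℂ) * zc + ↑b * wc) + (↑c * zc + ↑d * wc) = ↑(a+c) * zc + ↑(b+d) * wc := by
    push_cast; ring
  rw [e]; exact h

include hU0 hU1 hU2 in
lemma mem_neg {x : ℂ} (hx : x ∈ origami U) : -x ∈ origami U := by
  obtain ⟨a, b, hab⟩ := rep_zw x
  subst hab
  have := neg_rep hU0 hU1 hU2 hx
  have e : -((a:ℂ) * zc + ↑b * wc) = ↑(-a) * zc + ↑(-b) * wc := by push_cast; ring
  rw [e]; exact this

end ops3

section ops4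
variable {U : Set ℝ} (hU0 : (0:ℝ) ∈ U) (hU1 : Real.pi / 3 ∈ U) (hU2 : 2 * Real.pi / 3 ∈ U)

include hU0 hU1 in
lemma mem_smul_real {r : ℝ} (hr : (↑r : ℂ) ∈ origami U) :
    ∀ k, ∀ x ∈ origamiStep U k, (↑r * x : ℂ) ∈ origami U := by
  intro k
  induction k with
  | zero =>
    intro x hx
    rcases hx with h | h
    · rw [h, mul_zero]; exact mem_zero
    · rw [Set.mem_singleton_iff.mp h, mul_one]; exact hr
  | succ n ih =>
    rintro x ⟨z, hz, z', hz', γ, hγ, γ', hγ', hne, ⟨t, ht⟩, ⟨t', ht'⟩⟩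
    refine mem_combine hU0 hU1 (ih z hz) (ih z' hz') hγ hγ' hne ⟨r * t, ?_⟩ ⟨r * t', ?_⟩
    · rw [ht]; push_cast; ring
    · rw [ht']; push_cast; ring

include hU0 hU1 in
lemma mem_mul_real {r : ℝ} {x : ℂ} (hr : (↑r : ℂ) ∈ origami U) (hx : x ∈ origami U) :
    (↑r * x : ℂ) ∈ origami U := by
  obtain ⟨k, hk⟩ := Set.mem_iUnion.1 hx
  exact mem_smul_real hU0 hU1 hr k x hk

include hU0 hU1 hU2 in
lemma mem_zc : zc ∈ origami U := by
  refine mem_combine hU0 hU1 mem_zero mem_one hU1 hU2 ne12 ⟨1, ?_⟩ ⟨1, ?_⟩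
  · rw [zc_def]; push_cast; ring
  · rw [wc_def]; push_cast; linear_combination zc_sub_wc

include hU0 hU1 hU2 in
/-- coordinates of x ∈ M in the basis (1, zc) are real elements of M -/
lemma coords_mem {x : ℂ} {c d : ℝ} (hx : x ∈ origami U) (hrep : x = ↑c + ↑d * zc) :
    (↑c : ℂ) ∈ origami U ∧ (↑d : ℂ) ∈ origami U := by
  have hc : (↑c : ℂ) ∈ origami U := by
    refine mem_combine hU0 hU1 mem_zero hx hU0 hU1 ne01 ⟨c, ?_⟩ ⟨-d, ?_⟩
    · rw [exp0]; push_cast; ring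
    · rw [zc_def, hrep]; push_cast; ring
  refine ⟨hc, ?_⟩
  have hdz : (↑d * zc : ℂ) ∈ origami U := by
    have := mem_add hU0 hU1 hU2 hx (mem_neg hU0 hU1 hU2 hc)
    have e : x + -(↑c : ℂ) = ↑d * zc := by rw [hrep]; ring
    rwa [e] at this
  refine mem_combine hU0 hU1 mem_zero hdz hU0 hU2 ne02 ⟨d, ?_⟩ ⟨-d, ?_⟩
  · rw [exp0]; push_cast; ring
  · rw [wc_def]; push_cast; linear_combination (-(d:ℂ)) * zc_sub_wc

include hU0 hU1 hU2 in
lemma mem_mul {x y : ℂ} (hx : x ∈ origami U) (hy : y ∈ origami U) : x * y ∈ origami U := by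
  obtain ⟨c, d, hcd⟩ := rep_1z x
  obtain ⟨c', d', hcd'⟩ := rep_1z y
  obtain ⟨hc, hd⟩ := coords_mem hU0 hU1 hU2 hx hcd
  obtain ⟨hc', hd'⟩ := coords_mem hU0 hU1 hU2 hy hcd'
  have h1 : (↑(c * c') : ℂ) ∈ origami U := by
    have := mem_mul_real hU0 hU1 hc hc'; push_cast; push_cast at this; exact this
  have h2 : (↑(d * d') : ℂ) ∈ origami U := by
    have := mem_mul_real hU0 hU1 hd hd'; push_cast; push_cast at this; exact this
  have h3 : (↑(c * d' + d * c' + d * d') : ℂ) ∈ origami U := by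
    have a1 := mem_mul_real hU0 hU1 hc hd'
    have a2 := mem_mul_real hU0 hU1 hd hc'
    have := mem_add hU0 hU1 hU2 (mem_add hU0 hU1 hU2 a1 a2)
      (mem_mul_real hU0 hU1 hd hd')
    push_cast; push_cast at this; convert this using 1 <;> try ring
  have hzc := mem_zc hU0 hU1 hU2
  have main := mem_add hU0 hU1 hU2
    (mem_add hU0 hU1 hU2 h1 (mem_neg hU0 hU1 hU2 h2))
    (mem_mul_real hU0 hU1 h3 hzc)
  have e : x * y = (↑(c * c') + -↑(d * d')) + ↑(c * d' + d * c' + d * d') * zc := by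
    rw [hcd, hcd']; push_cast; linear_combination ((d:ℂ) * d') * zc_sq
  rwa [e]
end ops4

lemma origami_ring {U : Set ℝ} (hU0 : (0:ℝ) ∈ U) (hU1 : Real.pi / 3 ∈ U)
    (hU2 : 2 * Real.pi / 3 ∈ U) : ∃ R : Subring ℂ, (R : Set ℂ) = origami U := by
  refine ⟨{ carrier := origami U
            zero_mem' := mem_zero
            one_mem' := mem_one
            add_mem' := fun ha hb => mem_add hU0 hU1 hU2 ha hb
            mul_mem' := fun ha hb => mem_mul hU0 hU1 hU2 ha hb
            neg_mem' := fun ha => mem_neg hU0 hU1 hU2 ha }, rfl⟩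

lemma origami_mono {U U' : Set ℝ} (h : U ⊆ U') : origami U ⊆ origami U' := by
  have hstep : ∀ k, origamiStep U k ⊆ origamiStep U' k := by
    intro k
    induction k with
    | zero => exact subset_rfl
    | succ n ih =>
      rintro w ⟨z, hz, z', hz', γ, hγ, γ', hγ', hne, h1, h2⟩
      exact ⟨z, ih hz, z', ih hz', γ, h hγ, γ', h hγ', hne, h1, h2⟩
  exact Set.iUnion_mono hstep

theorem origami_ring_of_special_angles :
    (∀ U : Set ℝ, U ⊆ Set.Ico 0 Real.pi → (0 : ℝ) ∈ U →
      Real.pi / 3 ∈ U → 2 * Real.pi / 3 ∈ U →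
      ∃ R : Subring ℂ, (R : Set ℂ) = origami U) ∧
    (∀ U : Set ℝ, U ⊆ Set.Ico 0 Real.pi → (0 : ℝ) ∈ U → 3 ≤ U.encard →
      origami U ⊆ origami (U ∪ {Real.pi / 3, 2 * Real.pi / 3}) ∧
      ∃ R : Subring ℂ, (R : Set ℂ) = origami (U ∪ {Real.pi / 3, 2 * Real.pi / 3})) := by
  constructor
  · intro U _ h0 h1 h2
    exact origami_ring h0 h1 h2
  · intro U _ h0 _
    refine ⟨origami_mono Set.subset_union_left, ?_⟩
    refine origami_ring (Set.mem_union_left _ h0) ?_ ?_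
    · exact Set.mem_union_right _ (by simp)
    · exact Set.mem_union_right _ (by simp)
end
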